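/- arXiv:2406.15929 — 5 statements merged into one kernel-verified Lean document; each statement's English description precedes it below -/
import Mathlib

section
/- Let f be a polynomial with complex coefficients in the n²+n variables {x_{ki}, x'_{ki} : 1 ≤ i ≤ k ≤ n}. If f vanishes when evaluated at the family of entries (ℓ_{ki}, ℓ'_{ki}) of every C-standard tableau of type C, then f = 0. -/
open scoped BigOperators Classical

noncomputable section

namespace GTpaper

/-- `a - b ∈ ℤ≥0`, the integer-shift order `a ≥ b` on `ℂ`. -/
def IntGE (a b : ℂ) : Prop := ∃ m : ℕ, a = b + m

/-- `a - b ∈ ℤ>0`, the strict integer-shift order `a > b` on `ℂ`. -/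
def IntGT (a b : ℂ) : Prop := ∃ m : ℕ, a = b + m + 1

/-- `a ∈ ℤ` as a subset of `ℂ`. -/
def IsInt (a : ℂ) : Prop := ∃ m : ℤ, a = m

/-- `a ∈ 1/2 + ℤ` as a subset of `ℂ`. -/
def IsHalfInt (a : ℂ) : Prop := ∃ m : ℤ, a = (m : ℂ) + 1 / 2

/-- A tableau: a doubly indexed family of unprimed entries `u k i` (`ℓ_{ki}`) and primed
entries `p k i` (`ℓ'_{ki}`).  Only positions with `1 ≤ i ≤ k ≤ n` (resp. `2 ≤ i` for the primed
entries of type-`D` tableaux) are relevant; normalization predicates below set the rest to `0`. -/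
structure Tab (R : Type*) where
  u : ℕ → ℕ → R
  p : ℕ → ℕ → R

instance : Add (Tab ℤ) :=
  ⟨fun a b => ⟨fun k i => a.u k i + b.u k i, fun k i => a.p k i + b.p k i⟩⟩

instance : Neg (Tab ℤ) := ⟨fun a => ⟨fun k i => -a.u k i, fun k i => -a.p k i⟩⟩

/-- Add an integer tableau `Z` to a tableau `L`. -/
def Tab.addZ {R : Type*} [Ring R] (L : Tab R) (Z : Tab ℤ) : Tab R :=
  ⟨fun k i => L.u k i + (Z.u k i : R), fun k i => L.p k i + (Z.p k i : R)⟩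

/-- `δ^{(k i)}`: the integer tableau with a single `1` at unprimed position `(k,i)`. -/
def deltaU (k i : ℕ) : Tab ℤ :=
  ⟨fun a b => if a = k ∧ b = i then 1 else 0, fun _ _ => 0⟩

/-- `δ^{(k i)'}`: the integer tableau with a single `1` at primed position `(k,i)`. -/
def deltaP (k i : ℕ) : Tab ℤ :=
  ⟨fun _ _ => 0, fun a b => if a = k ∧ b = i then 1 else 0⟩

section Coeffs

variable {F : Type*} [Field F]

/-- `ω_k(L)`, the `k`-th component of the `C`-weight of a type-`C` tableau. -/
def wt (k : ℕ) (L : Tab F) : F :=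
  2 * (∑ i ∈ Finset.Icc 1 k, L.p k i) - (∑ i ∈ Finset.Icc 1 k, L.u k i) -
    (∑ i ∈ Finset.Icc 1 (k - 1), L.u (k - 1) i) + (k : F) - 1 / 2

/-- `A_{ki}(L)`. -/
def coA (k i : ℕ) (L : Tab F) : F :=
  ∏ a ∈ (Finset.Icc 1 k).erase i, (L.p k a - L.p k i)⁻¹

/-- `B_{ki}(L)`. -/
def coB (k i : ℕ) (L : Tab F) : F :=
  2 * coA k i L * (2 * L.p k i - 1) * (∏ a ∈ Finset.Icc 1 k, (L.u k a - L.p k i)) *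
    ∏ a ∈ Finset.Icc 1 (k - 1), (L.u (k - 1) a - L.p k i)

/-- `C_{ki}(L)`. -/
def coC (k i : ℕ) (L : Tab F) : F :=
  (2 * L.u (k - 1) i - 1)⁻¹ *
    ∏ a ∈ (Finset.Icc 1 (k - 1)).erase i,
      ((L.u (k - 1) i - L.u (k - 1) a) * (L.u (k - 1) i + L.u (k - 1) a - 1))⁻¹

/-- `D_{kijm}(L)`. -/
def coD (k i j m : ℕ) (L : Tab F) : F :=
  coA k i L * coA (k - 1) m L * coC k j L *
    (∏ a ∈ (Finset.Icc 1 k).erase i, (L.u (k - 1) j ^ 2 - L.p k a ^ 2)) *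
    ∏ a ∈ (Finset.Icc 1 (k - 1)).erase m, (L.u (k - 1) j ^ 2 - L.p (k - 1) a ^ 2)

end Coeffs

/-- The `C`-weight `ω(T(L)) ∈ ℂ^n` of a type-`C` tableau. -/
def cwtv (n : ℕ) (T : Tab ℂ) : Fin n → ℂ := fun k => wt ((k : ℕ) + 1) T

/-- A type-`C` tableau is `C`-standard (conditions (7) and (8)). -/
def IsCStandard (n : ℕ) (T : Tab ℂ) : Prop :=
  ∀ k, 1 ≤ k → k ≤ n →
    (IntGE (-(1 / 2)) (T.p k 1) ∧
      (∀ i, 1 ≤ i → i ≤ k → IntGE (T.p k i) (T.u k i)) ∧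
      (∀ i, 1 ≤ i → i + 1 ≤ k → IntGT (T.u k i) (T.p k (i + 1))) ∧
      (2 ≤ k →
        (∀ i, 1 ≤ i → i ≤ k - 1 → IntGE (T.p k i) (T.u (k - 1) i)) ∧
        (∀ i, 1 ≤ i → i ≤ k - 1 → IntGT (T.u (k - 1) i) (T.p k (i + 1)))))

/-- A type-`D` tableau is `D`-standard (conditions (5) and (6)); primed entries `p k 1`
are irrelevant. -/
def IsDStandard (n : ℕ) (T : Tab ℂ) : Prop :=
  ∀ k, 2 ≤ k → k ≤ n →
    (IntGE (-T.p k 2) (T.u k 1) ∧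
      (∀ i, 2 ≤ i → i ≤ k → IntGE (T.p k i) (T.u k i)) ∧
      (∀ i, 1 ≤ i → i + 1 ≤ k → IntGT (T.u k i) (T.p k (i + 1))) ∧
      IntGE (-T.p k 2) (T.u (k - 1) 1) ∧
      (∀ i, 2 ≤ i → i ≤ k - 1 → IntGE (T.p k i) (T.u (k - 1) i)) ∧
      (∀ i, 1 ≤ i → i ≤ k - 1 → IntGT (T.u (k - 1) i) (T.p k (i + 1))))

/-- `C`-regularity of a type-`C` tableau. -/
def IsCRegular (n : ℕ) (T : Tab ℂ) : Prop :=
  (∀ k i a, 1 ≤ i → i ≤ k → 1 ≤ a → a ≤ k → k ≤ n → i ≠ a → T.p k a ≠ T.p k i) ∧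
  (∀ k i a, 1 ≤ i → i ≤ k → 1 ≤ a → a ≤ k → k ≤ n - 1 → i ≠ a → T.u k a ≠ T.u k i) ∧
  (∀ k i a, 1 ≤ i → i ≤ k → 1 ≤ a → a ≤ k → k ≤ n - 1 → i ≠ a → T.u k a + T.u k i ≠ 1) ∧
  (∀ k i, 1 ≤ i → i ≤ k → k ≤ n - 1 → T.u k i ≠ 1 / 2)

/-- `C`-genericity of a type-`C` tableau. -/
def IsCGeneric (n : ℕ) (T : Tab ℂ) : Prop :=
  (∀ k i a, 1 ≤ i → i ≤ k → 1 ≤ a → a ≤ k → k ≤ n → i ≠ a → ¬IsInt (T.p k a - T.p k i)) ∧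
  (∀ k i a, 1 ≤ i → i ≤ k → 1 ≤ a → a ≤ k → k ≤ n - 1 → i ≠ a → ¬IsInt (T.u k a - T.u k i)) ∧
  (∀ k i a, 1 ≤ i → i ≤ k → 1 ≤ a → a ≤ k → k ≤ n - 1 → ¬IsInt (T.u k a + T.u k i)) ∧
  (∀ k i, 1 ≤ i → i ≤ k → k ≤ n - 1 → ¬IsHalfInt (T.u k i))

/-- Normalization of a type-`C` tableau: all entries outside `1 ≤ i ≤ k ≤ n` vanish. -/
def CNorm (n : ℕ) (T : Tab ℂ) : Prop :=
  (∀ k i, ¬(1 ≤ i ∧ i ≤ k ∧ k ≤ n) → T.u k i = 0) ∧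
  (∀ k i, ¬(1 ≤ i ∧ i ≤ k ∧ k ≤ n) → T.p k i = 0)

/-- Normalization of a type-`D` tableau: unprimed entries outside `1 ≤ i ≤ k ≤ n` and primed
entries outside `2 ≤ i ≤ k ≤ n` vanish. -/
def DNorm (n : ℕ) (T : Tab ℂ) : Prop :=
  (∀ k i, ¬(1 ≤ i ∧ i ≤ k ∧ k ≤ n) → T.u k i = 0) ∧
  (∀ k i, ¬(2 ≤ i ∧ i ≤ k ∧ k ≤ n) → T.p k i = 0)

/-- A dominant `so(2n)`-weight. -/
def SODominant {n : ℕ} (lam : Fin n → ℂ) : Prop :=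
  (∀ i j : Fin n, (i : ℕ) + 1 = (j : ℕ) → IntGE (lam i) (lam j)) ∧
  (∀ i j : Fin n, (i : ℕ) = 0 → (j : ℕ) = 1 → IntGE (-(lam i + lam j)) 0)

/-- `D_st^λ`: the set of (normalized) `D`-standard tableaux with top row
`ℓ_i = λ_i - i + 3/2` (`1`-based `i`). -/
def DSt (n : ℕ) (lam : Fin n → ℂ) : Set (Tab ℂ) :=
  {T | DNorm n T ∧ IsDStandard n T ∧
    ∀ i : Fin n, T.u n ((i : ℕ) + 1) = lam i - ((i : ℕ) + 1) + 3 / 2}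

/-- The type-`D` tableau obtained from a type-`C` tableau by deleting the entries
`ℓ'_{11}, …, ℓ'_{n1}`. -/
def CtoD (W : Tab ℂ) : Tab ℂ := ⟨W.u, fun k i => if i = 1 then 0 else W.p k i⟩

/-- `𝔅(μ,λ)`: type-`C` tableaux whose left-most primed column is in `μ + ℤ^n` and whose
remaining part is a `D`-standard tableau with top row `λ + ρ_D + 1/2`. -/
def TabB (n : ℕ) (mu lam : Fin n → ℂ) : Set (Tab ℂ) :=
  {W | CNorm n W ∧ (∀ k : Fin n, IsInt (W.p ((k : ℕ) + 1) 1 - mu k)) ∧ CtoD W ∈ DSt n lam}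

/-- Membership of a vector of `ℂ^n` in the root lattice `Q_C = {a ∈ ℤ^n | ∑ a_i ∈ 2ℤ}`. -/
def QCvec {n : ℕ} (v : Fin n → ℂ) : Prop :=
  ∃ q : Fin n → ℤ, (2 ∣ ∑ i, q i) ∧ ∀ i, v i = (q i : ℂ)

/-! ### The symplectic Lie algebra `sp(2n, ℂ)` -/

/-- Index set `{1,…,n} × {±}` for rows/columns of `2n × 2n` matrices: `(k, true)` is the
positive index `k`, `(k, false)` is the negative index `-k`. -/
abbrev SpIdx (n : ℕ) := Fin n × Bool

/-- The sign of an index. -/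
def sgnC {n : ℕ} (a : SpIdx n) : ℂ := if a.2 then 1 else -1

/-- `a ↦ -a` on indices. -/
def negIdx {n : ℕ} (a : SpIdx n) : SpIdx n := (a.1, !a.2)

/-- `F_{ab} = E_{ab} - sgn(a)sgn(b) E_{-b,-a}`. -/
def Fmat (n : ℕ) (a b : SpIdx n) : Matrix (SpIdx n) (SpIdx n) ℂ :=
  Matrix.single a b 1 - Matrix.single (negIdx b) (negIdx a) (sgnC a * sgnC b)

attribute [local instance 100] LieRing.ofAssociativeRing

/-- `sp(2n, ℂ)`: the Lie subalgebra of `gl(2n, ℂ)` spanned by the `F_{ab}`. -/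
def sp (n : ℕ) : LieSubalgebra ℂ (Matrix (SpIdx n) (SpIdx n) ℂ) :=
  LieSubalgebra.lieSpan ℂ _ (Set.range fun x : SpIdx n × SpIdx n => Fmat n x.1 x.2)

/-- `F_{ab}` as an element of `sp(2n, ℂ)`. -/
def spF (n : ℕ) (a b : SpIdx n) : sp n :=
  ⟨Fmat n a b, LieSubalgebra.subset_lieSpan ⟨(a, b), rfl⟩⟩

/-- The basis vector of the free module on a set `S` of tableaux attached to `L`, with the
convention that `T(L) = 0` whenever `L ∉ S`. -/
def bvec {F : Type*} [Field F] (S : Set (Tab F)) (L : Tab F) : ↥S →₀ F :=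
  if h : L ∈ S then Finsupp.single ⟨L, h⟩ 1 else 0

/-- The statement that a Lie algebra homomorphism `ρ : sp(2n,ℂ) → End(V)` acts on the basis `S`
of tableaux by the Gelfand--Tsetlin formulas (with 1-based row index `k+1` for `k : Fin n`). -/
def GTact (n : ℕ) {F : Type*} [Field F] [Algebra ℂ F] (S : Set (Tab F))
    (ρ : sp n →ₗ⁅ℂ⁆ Module.End ℂ (↥S →₀ F)) : Prop :=
  ∀ L ∈ S,
    (∀ k : Fin n,
      ρ (spF n (k, true) (k, true)) (bvec S L) = wt ((k : ℕ) + 1) L • bvec S L ∧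
      ρ (spF n (k, true) (k, false)) (bvec S L) =
        ∑ i ∈ Finset.Icc 1 ((k : ℕ) + 1),
          coA ((k : ℕ) + 1) i L • bvec S (L.addZ (deltaP ((k : ℕ) + 1) i)) ∧
      ρ (spF n (k, false) (k, true)) (bvec S L) =
        ∑ i ∈ Finset.Icc 1 ((k : ℕ) + 1),
          coB ((k : ℕ) + 1) i L • bvec S (L.addZ (-deltaP ((k : ℕ) + 1) i))) ∧
    (∀ k : Fin n, 1 ≤ (k : ℕ) →
      ρ (spF n (⟨(k : ℕ) - 1, lt_of_le_of_lt (Nat.sub_le _ _) k.isLt⟩, true) (k, false))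
          (bvec S L) =
        (∑ i ∈ Finset.Icc 1 (k : ℕ),
          coC ((k : ℕ) + 1) i L • bvec S (L.addZ (-deltaU (k : ℕ) i))) +
        ∑ i ∈ Finset.Icc 1 ((k : ℕ) + 1), ∑ j ∈ Finset.Icc 1 (k : ℕ), ∑ m ∈ Finset.Icc 1 (k : ℕ),
          coD ((k : ℕ) + 1) i j m L •
            bvec S (L.addZ (deltaP ((k : ℕ) + 1) i + deltaU (k : ℕ) j + deltaP (k : ℕ) m)))

/-- The set of tableaux `{T(L + Z)}` with `Z` an integer tableau vanishing on the unprimed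
top row. -/
def orbitB {F : Type*} [Field F] (n : ℕ) (L : Tab F) : Set (Tab F) :=
  {M | ∃ Z : Tab ℤ, (∀ i, Z.u n i = 0) ∧ M = L.addZ Z}

/-- The tableau `T(W^{μ,λ})`. -/
def Wup (n : ℕ) (mu lam : Fin n → ℂ) : Tab ℂ :=
  ⟨fun k i => if h : 1 ≤ i ∧ i ≤ k ∧ k ≤ n then lam ⟨i - 1, by omega⟩ - (i : ℂ) + 3 / 2 else 0,
   fun k i => if h : 1 ≤ i ∧ i ≤ k ∧ k ≤ n then
      (if i = 1 then mu ⟨k - 1, by omega⟩ else lam ⟨i - 1, by omega⟩ - (i : ℂ) + 3 / 2) else 0⟩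

/-- The tableau `T(W_{μ,λ})`. -/
def Wlow (n : ℕ) (mu lam : Fin n → ℂ) : Tab ℂ :=
  ⟨fun k i => if h : 1 ≤ i ∧ i ≤ k ∧ k ≤ n then
      (if i = 1 then
        (if (n - k) % 2 = 0 then lam ⟨0, by omega⟩ + 1 / 2 else 1 - (lam ⟨0, by omega⟩ + 1 / 2))
       else lam ⟨i - 1, by omega⟩ - (i : ℂ) + 3 / 2) else 0,
   fun k i => if h : 1 ≤ i ∧ i ≤ k ∧ k ≤ n then
      (if i = 1 then mu ⟨k - 1, by omega⟩ else lam ⟨i - 1, by omega⟩ - (i : ℂ) + 3 / 2) else 0⟩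

/-- `𝔅_k^+(μ,λ)` for a `1`-based row index `k`. -/
def BkPlus (n : ℕ) (mu lam : Fin n → ℂ) (k : ℕ) : Set (Tab ℂ) :=
  {W | W ∈ TabB n mu lam ∧ IntGE (W.p k 1) (1 / 2)}

end GTpaper

namespace GTpaper

/-- Index set for the `n² + n` variables `x_{ki}, x'_{ki}` (`1 ≤ i ≤ k ≤ n`);
the boolean is `true` for primed variables. -/
def VIdx (n : ℕ) := {x : ℕ × ℕ // 1 ≤ x.2 ∧ x.2 ≤ x.1 ∧ x.1 ≤ n} × Bool


/-! ### Auxiliary material for the density lemma -/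

open MvPolynomial in
/-- A multivariate polynomial over `ℂ` vanishing at all natural-number points is zero. -/
lemma auxA : ∀ (N : ℕ) (p : MvPolynomial (Fin N) ℂ),
    (∀ y : Fin N → ℕ, MvPolynomial.eval (fun i => (y i : ℂ)) p = 0) → p = 0 := by
  intro N
  induction N with
  | zero =>
    intro p h
    apply MvPolynomial.funext
    intro x
    rw [map_zero]
    have hx : x = fun i : Fin 0 => (((fun _ : Fin 0 => (0 : ℕ)) i : ℕ) : ℂ) :=
      funext fun i => i.elim0
    rw [hx]
    exact h _
  | succ N ih =>
    intro p h
    have hq : MvPolynomial.finSuccEquiv ℂ N p = 0 := by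
      apply Polynomial.ext
      intro d
      rw [Polynomial.coeff_zero]
      apply ih
      intro y
      have hr : Polynomial.map (MvPolynomial.eval fun i => (y i : ℂ))
          (MvPolynomial.finSuccEquiv ℂ N p) = 0 := by
        apply Polynomial.eq_zero_of_infinite_isRoot
        apply Set.Infinite.mono (s := Set.range (Nat.cast : ℕ → ℂ))
        · rintro x ⟨m, rfl⟩
          show Polynomial.IsRoot _ _
          unfold Polynomial.IsRoot
          rw [← MvPolynomial.eval_eq_eval_mv_eval']
          have hcons : (Fin.cons ((m : ℕ) : ℂ) (fun i => (y i : ℂ)) : Fin (N + 1) → ℂ) =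
              fun i => (((Fin.cons m y : Fin (N + 1) → ℕ) i : ℕ) : ℂ) := by
            funext j
            induction j using Fin.cases <;> simp
          rw [hcons]
          exact h (Fin.cons m y)
        · exact Set.infinite_range_of_injective Nat.cast_injective
      rw [← Polynomial.coeff_zero d, ← hr, Polynomial.coeff_map]
    apply (MvPolynomial.finSuccEquiv ℂ N).injective
    rw [hq, map_zero]

/-- The decreasing chain of points used to parametrize standard tableaux. -/
def chainPt (N : ℕ) (z : Fin N → ℂ) : Fin N → ℂ :=
  fun j => -(1 / 2) - ∑ i ∈ Finset.Iic j, (1 + z i)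

lemma chainPt_half {N : ℕ} (z : Fin N → ℕ) (a : Fin N) :
    IntGE (-(1 / 2)) (chainPt N (fun i => (z i : ℂ)) a) := by
  refine ⟨∑ i ∈ Finset.Iic a, (1 + z i), ?_⟩
  have hc : ((∑ i ∈ Finset.Iic a, (1 + z i) : ℕ) : ℂ) =
      ∑ i ∈ Finset.Iic a, (1 + (z i : ℂ)) := by
    push_cast
    rfl
  simp only [chainPt]
  rw [hc]
  ring

lemma chainPt_int_gt {N : ℕ} (z : Fin N → ℕ) {a b : Fin N} (hab : a < b) :
    IntGT (chainPt N (fun i => (z i : ℂ)) a) (chainPt N (fun i => (z i : ℂ)) b) := by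
  classical
  have hsub : Finset.Iic a ⊆ Finset.Iic b := Finset.Iic_subset_Iic.2 hab.le
  have hb : b ∈ Finset.Iic b \ Finset.Iic a := by
    simp [Finset.mem_sdiff, Finset.mem_Iic, hab.not_ge]
  set S : ℕ := ∑ i ∈ Finset.Iic b \ Finset.Iic a, (1 + z i) with hS
  have hS1 : 1 ≤ S := by
    have h1 : 1 + z b ≤ S :=
      Finset.single_le_sum (f := fun i => 1 + z i) (fun i _ => Nat.zero_le _) hb
    omega
  refine ⟨S - 1, ?_⟩
  have hsum : (∑ i ∈ Finset.Iic b \ Finset.Iic a, (1 + (z i : ℂ))) +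
      ∑ i ∈ Finset.Iic a, (1 + (z i : ℂ)) = ∑ i ∈ Finset.Iic b, (1 + (z i : ℂ)) :=
    Finset.sum_sdiff hsub
  have hcast : (∑ i ∈ Finset.Iic b \ Finset.Iic a, (1 + (z i : ℂ))) = (S : ℂ) := by
    rw [hS, Nat.cast_sum]
    push_cast
    rfl
  simp only [chainPt]
  rw [← hsum, hcast, Nat.cast_sub hS1]
  push_cast
  ring

lemma IntGT.intGE {a b : ℂ} (h : IntGT a b) : IntGE a b := by
  obtain ⟨m, hm⟩ := h
  exact ⟨m + 1, by rw [hm]; push_cast; ring⟩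

/-- Extend a function on `Fin N` to `ℕ` by zero. -/
def extFn (N : ℕ) (x : Fin N → ℂ) (m : ℕ) : ℂ :=
  if h : m < N then x ⟨m, h⟩ else 0

lemma extFn_eq (N : ℕ) (x : Fin N → ℂ) (j : Fin N) : extFn N x (j : ℕ) = x j := by
  simp [extFn]

open MvPolynomial in
/-- A polynomial vanishing at every natural chain point is zero. -/
lemma auxM (N : ℕ) (p : MvPolynomial (Fin N) ℂ)
    (h : ∀ y : Fin N → ℕ, MvPolynomial.eval (chainPt N fun i => (y i : ℂ)) p = 0) :
    p = 0 := by
  classical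
  set σg : Fin N → MvPolynomial (Fin N) ℂ := fun j =>
    MvPolynomial.C (-(1 / 2)) - ∑ i ∈ Finset.Iic j, (1 + MvPolynomial.X i) with hσ
  have keyeval : ∀ z : Fin N → ℂ,
      MvPolynomial.eval z (MvPolynomial.bind₁ σg p) = MvPolynomial.eval (chainPt N z) p := by
    intro z
    have h1 : MvPolynomial.eval z (MvPolynomial.bind₁ σg p) =
        MvPolynomial.eval (fun i => MvPolynomial.eval z (σg i)) p :=
      MvPolynomial.eval₂Hom_bind₁ _ _ _ _
    rw [h1]
    have h2 : (fun i => MvPolynomial.eval z (σg i)) = chainPt N z := by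
      funext j
      simp [hσ, chainPt]
    rw [h2]
  have hg0 : MvPolynomial.bind₁ σg p = 0 := by
    apply auxA
    intro y
    rw [keyeval]
    exact h y
  apply MvPolynomial.funext
  intro x
  rw [map_zero]
  set w : Fin N → ℂ := fun j =>
    (if (j : ℕ) = 0 then -(1 / 2) else extFn N x ((j : ℕ) - 1)) - x j - 1 with hw
  have tel : ∀ (m : ℕ) (j : Fin N), (j : ℕ) = m →
      (∑ i ∈ Finset.Iic j, (1 + w i)) = -(1 / 2) - x j := by
    intro m
    induction m with
    | zero =>
      intro j hj
      have hsing : Finset.Iic j = {j} := by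
        ext i
        simp only [Finset.mem_Iic, Finset.mem_singleton, Fin.le_def, Fin.ext_iff]
        omega
      rw [hsing, Finset.sum_singleton]
      simp only [hw]
      rw [if_pos hj]
      ring
    | succ m ihm =>
      intro j hj
      have hjpos : ¬((j : ℕ) = 0) := by omega
      have hmlt : m < N := by omega
      set j' : Fin N := ⟨m, hmlt⟩ with hj'
      have hsplit : Finset.Iic j = insert j (Finset.Iic j') := by
        ext i
        simp only [Finset.mem_Iic, Finset.mem_insert, Fin.le_def, Fin.ext_iff, hj', hj]
        omega
      have hnot : j ∉ Finset.Iic j' := by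
        simp only [Finset.mem_Iic, Fin.le_def, hj', hj]
        omega
      rw [hsplit, Finset.sum_insert hnot, ihm j' rfl]
      have hwj : w j = x j' - x j - 1 := by
        simp only [hw]
        rw [if_neg hjpos]
        rw [show (j : ℕ) - 1 = m by omega]
        have hx' : extFn N x m = x j' := by
          have := extFn_eq N x j'
          simpa [hj'] using this
        rw [hx']
      rw [hwj]
      ring
  have hpt : chainPt N w = x := by
    funext j
    have := tel (j : ℕ) j rfl
    simp only [chainPt]
    rw [this]
    ring
  rw [← hpt, ← keyeval w, hg0, map_zero]

/-- The rank of a variable index: entries with smaller rank are larger in every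
`C`-standard tableau built below. -/
def rk (n : ℕ) (v : VIdx n) : ℕ :=
  (cond v.2 v.1.1.1 (n + 1 + v.1.1.1)) + (v.1.1.2 - 1) * (2 * n + 2)

lemma rk_p (n k i : ℕ) (h : 1 ≤ i ∧ i ≤ k ∧ k ≤ n) :
    rk n (⟨⟨(k, i), h⟩, true⟩ : VIdx n) = k + (i - 1) * (2 * n + 2) := rfl

lemma rk_u (n k i : ℕ) (h : 1 ≤ i ∧ i ≤ k ∧ k ≤ n) :
    rk n (⟨⟨(k, i), h⟩, false⟩ : VIdx n) = (n + 1 + k) + (i - 1) * (2 * n + 2) := rfl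

lemma rk_injective (n : ℕ) : Function.Injective (rk n) := by
  rintro ⟨⟨⟨k, i⟩, hi1, hik, hkn⟩, b⟩ ⟨⟨⟨k', i'⟩, hi1', hik', hkn'⟩, b'⟩ h
  simp only [rk] at h
  have hov : cond b k (n + 1 + k) < 2 * n + 2 := by
    cases b <;> simp only [Bool.cond_true, Bool.cond_false] <;> omega
  have how : cond b' k' (n + 1 + k') < 2 * n + 2 := by
    cases b' <;> simp only [Bool.cond_true, Bool.cond_false] <;> omega
  have h1 : cond b k (n + 1 + k) = cond b' k' (n + 1 + k') := by
    have hm := congrArg (· % (2 * n + 2)) h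
    simpa [Nat.add_mul_mod_self_right, Nat.mod_eq_of_lt hov, Nat.mod_eq_of_lt how] using hm
  rw [h1] at h
  have h2 : (i - 1) * (2 * n + 2) = (i' - 1) * (2 * n + 2) := Nat.add_left_cancel h
  have h3 : i = i' := by
    have := Nat.eq_of_mul_eq_mul_right (by omega : 0 < 2 * n + 2) h2
    omega
  have h4 : k = k' ∧ b = b' := by
    cases b <;> cases b' <;> simp only [Bool.cond_true, Bool.cond_false] at h1 <;>
      first
        | exact ⟨by omega, rfl⟩
        | exact absurd h1 (by omega)
  obtain ⟨rfl, rfl⟩ := h4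
  subst h3
  rfl

instance instFintypeVIdx (n : ℕ) : Fintype (VIdx n) :=
  Fintype.ofInjective
    (fun v : VIdx n =>
      ((⟨v.1.1.1, Nat.lt_succ_of_le v.1.2.2.2⟩ : Fin (n + 1)),
        (⟨v.1.1.2, Nat.lt_succ_of_le (le_trans v.1.2.2.1 v.1.2.2.2)⟩ : Fin (n + 1)), v.2))
    (by
      rintro ⟨⟨⟨k, i⟩, h⟩, b⟩ ⟨⟨⟨k', i'⟩, h'⟩, b'⟩ hvw
      simp only [Prod.mk.injEq, Fin.mk.injEq] at hvw
      obtain ⟨rfl, rfl, rfl⟩ := hvw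
      rfl)

lemma rkLtAux {a b i j M : ℕ} (haM : a < M) (hij : i < j) : a + i * M < b + j * M :=
  calc a + i * M < M + i * M := Nat.add_lt_add_right haM _
    _ = (i + 1) * M := by ring
    _ ≤ j * M := Nat.mul_le_mul_right M hij
    _ ≤ b + j * M := Nat.le_add_left _ _

/-- The tableau with entries given by a function on the variable indices. -/
def tabOf (n : ℕ) (val : VIdx n → ℂ) : Tab ℂ :=
  ⟨fun k i => if h : 1 ≤ i ∧ i ≤ k ∧ k ≤ n then val ⟨⟨(k, i), h⟩, false⟩ else 0,
   fun k i => if h : 1 ≤ i ∧ i ≤ k ∧ k ≤ n then val ⟨⟨(k, i), h⟩, true⟩ else 0⟩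

lemma tabOf_u (n : ℕ) (val : VIdx n → ℂ) (k i : ℕ) (h : 1 ≤ i ∧ i ≤ k ∧ k ≤ n) :
    (tabOf n val).u k i = val ⟨⟨(k, i), h⟩, false⟩ := dif_pos h

lemma tabOf_p (n : ℕ) (val : VIdx n → ℂ) (k i : ℕ) (h : 1 ≤ i ∧ i ≤ k ∧ k ≤ n) :
    (tabOf n val).p k i = val ⟨⟨(k, i), h⟩, true⟩ := dif_pos h

lemma tabOf_evalpt (n : ℕ) (val : VIdx n → ℂ) :
    (fun v : VIdx n =>
      if v.2 then (tabOf n val).p v.1.1.1 v.1.1.2 else (tabOf n val).u v.1.1.1 v.1.1.2) = val := by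
  funext v
  obtain ⟨⟨⟨k, i⟩, hv⟩, b⟩ := v
  cases b
  · show (tabOf n val).u k i = _
    rw [tabOf_u n val k i hv]
  · show (tabOf n val).p k i = _
    rw [tabOf_p n val k i hv]

lemma tabOf_std (n : ℕ) (val : VIdx n → ℂ)
    (hhalf : ∀ v, IntGE (-(1 / 2)) (val v))
    (hgt : ∀ v w : VIdx n, rk n v < rk n w → IntGT (val v) (val w)) :
    IsCStandard n (tabOf n val) := by
  have hge : ∀ v w : VIdx n, rk n v < rk n w → IntGE (val v) (val w) := fun v w h =>
    (hgt v w h).intGE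
  intro k hk1 hkn
  refine ⟨?_, ?_, ?_, ?_⟩
  · rw [tabOf_p n val k 1 ⟨le_refl 1, hk1, hkn⟩]
    exact hhalf _
  · intro i hi1 hik
    have hv : 1 ≤ i ∧ i ≤ k ∧ k ≤ n := ⟨hi1, hik, hkn⟩
    rw [tabOf_p n val k i hv, tabOf_u n val k i hv]
    apply hge
    rw [rk_p n k i hv, rk_u n k i hv]
    exact Nat.add_lt_add_right (by omega) _
  · intro i hi1 hik
    have hvu : 1 ≤ i ∧ i ≤ k ∧ k ≤ n := ⟨hi1, by omega, hkn⟩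
    have hvp : 1 ≤ i + 1 ∧ i + 1 ≤ k ∧ k ≤ n := ⟨by omega, hik, hkn⟩
    rw [tabOf_u n val k i hvu, tabOf_p n val k (i + 1) hvp]
    apply hgt
    rw [rk_u n k i hvu, rk_p n k (i + 1) hvp]
    exact rkLtAux (by omega) (by omega)
  · intro h2k
    constructor
    · intro i hi1 hik1
      have hvp : 1 ≤ i ∧ i ≤ k ∧ k ≤ n := ⟨hi1, by omega, hkn⟩
      have hvu : 1 ≤ i ∧ i ≤ k - 1 ∧ k - 1 ≤ n := ⟨hi1, hik1, by omega⟩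
      rw [tabOf_p n val k i hvp, tabOf_u n val (k - 1) i hvu]
      apply hge
      rw [rk_p n k i hvp, rk_u n (k - 1) i hvu]
      exact Nat.add_lt_add_right (by omega) _
    · intro i hi1 hik1
      have hvu : 1 ≤ i ∧ i ≤ k - 1 ∧ k - 1 ≤ n := ⟨hi1, hik1, by omega⟩
      have hvp : 1 ≤ i + 1 ∧ i + 1 ≤ k ∧ k ≤ n := ⟨by omega, by omega, hkn⟩
      rw [tabOf_u n val (k - 1) i hvu, tabOf_p n val k (i + 1) hvp]
      apply hgt
      rw [rk_u n (k - 1) i hvu, rk_p n k (i + 1) hvp]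
      exact rkLtAux (by omega) (by omega)

/-- density lemma: a polynomial in the `n²+n` variables vanishing on the
entries of every `C`-standard tableau is zero. -/
theorem density_lemma (n : ℕ) (hn : 2 ≤ n) (f : MvPolynomial (VIdx n) ℂ)
    (hf : ∀ T : Tab ℂ, IsCStandard n T →
      MvPolynomial.eval
        (fun v : VIdx n => if v.2 then T.p v.1.1.1 v.1.1.2 else T.u v.1.1.1 v.1.1.2) f = 0) :
    f = 0 := by
  classical
  letI : LinearOrder (VIdx n) := LinearOrder.lift' (rk n) (rk_injective n)
  let N := Fintype.card (VIdx n)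
  let e : Fin N ≃o VIdx n := monoEquivOfFin (VIdx n) rfl
  have key : ∀ y : Fin N → ℕ,
      MvPolynomial.eval (chainPt N fun i => (y i : ℂ))
        (MvPolynomial.rename (fun v : VIdx n => e.symm v) f) = 0 := by
    intro y
    rw [MvPolynomial.eval_rename]
    have hgt : ∀ v w : VIdx n, rk n v < rk n w →
        IntGT (chainPt N (fun i => (y i : ℂ)) (e.symm v))
          (chainPt N (fun i => (y i : ℂ)) (e.symm w)) := by
      intro v w hvw
      apply chainPt_int_gt
      have hvw' : v < w := by
        apply lt_of_le_of_ne
        · exact hvw.le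
        · intro hc
          rw [hc] at hvw
          exact lt_irrefl _ hvw
      exact e.symm.strictMono hvw'
    have h1 := hf (tabOf n (fun v => chainPt N (fun i => (y i : ℂ)) (e.symm v)))
      (tabOf_std n _ (fun v => chainPt_half y (e.symm v)) hgt)
    rw [tabOf_evalpt] at h1
    exact h1
  have h0 : MvPolynomial.rename (fun v : VIdx n => e.symm v) f = 0 := auxM N _ key
  have hinj := MvPolynomial.rename_injective (R := ℂ) (fun v : VIdx n => e.symm v)
    (fun a b hab => e.symm.injective hab)
  apply hinj
  rw [h0, map_zero]

end GTpaper
end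
end

section
/- Let μ ∈ ℂ^n and let λ ∈ (1/2+ℤ)^n be a dominant so(2n)-weight; set ℓ_i = λ_i − i + 3/2. Let T(W_{μ,λ}) be the type-C tableau with w'_{k1} = μ_k for k ∈ [n], w_{n1} = ℓ_1, w_{k−1,1} = 1 − w_{k1} for 2 ≤ k ≤ n, and w_{ki} = w'_{ki} = ℓ_i for 2 ≤ i ≤ k ≤ n. Then T(W_{μ,λ}) ∈ B(μ,λ); moreover ω(T(W_{μ,λ})) = 2μ + λ if n is even, and ω(T(W_{μ,λ})) = 2μ + (−λ_1, λ_2, …, λ_n) if n is odd. -/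
open scoped BigOperators Classical

noncomputable section

namespace GTpaper

/-! ### The symplectic Lie algebra `sp(2n, ℂ)` -/

attribute [local instance 100] LieRing.ofAssociativeRing

end GTpaper

namespace GTpaper

/-- Total version of `ℓ_i = λ_{i-1} - i + 3/2` (1-based `i`). -/
private def ell (n : ℕ) (lam : Fin n → ℂ) (i : ℕ) : ℂ :=
  if h : i - 1 < n then lam ⟨i - 1, h⟩ - (i : ℂ) + 3 / 2 else 0

private lemma Wlow_u2 (n : ℕ) (mu lam : Fin n → ℂ) {k i : ℕ} (h1 : 2 ≤ i) (h2 : i ≤ k)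
    (h3 : k ≤ n) : (Wlow n mu lam).u k i = ell n lam i := by
  simp only [Wlow, ell]
  rw [dif_pos ⟨by omega, h2, h3⟩, if_neg (by omega), dif_pos (by omega)]

private lemma Wlow_p2 (n : ℕ) (mu lam : Fin n → ℂ) {k i : ℕ} (h1 : 2 ≤ i) (h2 : i ≤ k)
    (h3 : k ≤ n) : (Wlow n mu lam).p k i = ell n lam i := by
  simp only [Wlow, ell]
  rw [dif_pos ⟨by omega, h2, h3⟩, if_neg (by omega), dif_pos (by omega)]

private lemma Wlow_p1 (n : ℕ) (mu lam : Fin n → ℂ) {k : ℕ} (h1 : 1 ≤ k) (h3 : k ≤ n) :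
    (Wlow n mu lam).p k 1 = mu ⟨k - 1, by omega⟩ := by
  simp only [Wlow]
  rw [dif_pos ⟨le_rfl, by omega, h3⟩]
  simp

private lemma Wlow_u1 (n : ℕ) (mu lam : Fin n → ℂ) {k : ℕ} (h1 : 1 ≤ k) (h3 : k ≤ n) :
    (Wlow n mu lam).u k 1 =
      if (n - k) % 2 = 0 then lam ⟨0, by omega⟩ + 1 / 2
      else 1 - (lam ⟨0, by omega⟩ + 1 / 2) := by
  simp only [Wlow]
  rw [dif_pos ⟨le_rfl, by omega, h3⟩]
  simp

private lemma ell_step (n : ℕ) (lam : Fin n → ℂ) (hdom : SODominant lam) {i : ℕ}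
    (h1 : 2 ≤ i) (h2 : i + 1 ≤ n) :
    ∃ m : ℕ, ell n lam i = ell n lam (i + 1) + m + 1 := by
  obtain ⟨m, hm⟩ := hdom.1 ⟨i - 1, by omega⟩ ⟨i, by omega⟩ (by simp only [Fin.val_mk]; omega)
  refine ⟨m, ?_⟩
  simp only [ell]
  rw [dif_pos (by omega : i - 1 < n), dif_pos (by omega : i + 1 - 1 < n)]
  have he : (⟨i + 1 - 1, by omega⟩ : Fin n) = ⟨i, by omega⟩ := by ext; simp
  rw [he, hm]
  push_cast
  ring

private lemma ell_two (n : ℕ) (lam : Fin n → ℂ) (hn : 2 ≤ n) :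
    ell n lam 2 = lam ⟨1, by omega⟩ - 1 / 2 := by
  simp only [ell]
  rw [dif_pos (by omega : 2 - 1 < n)]
  push_cast
  ring

private lemma sum_Icc_one {k : ℕ} (h : 1 ≤ k) (g : ℕ → ℂ) :
    ∑ i ∈ Finset.Icc 1 k, g i = g 1 + ∑ i ∈ Finset.Icc 2 k, g i := by
  have he : Finset.Icc 1 k = insert 1 (Finset.Icc 2 k) := by
    ext x; simp only [Finset.mem_Icc, Finset.mem_insert]; omega
  rw [he, Finset.sum_insert (by simp)]
/-- `T(W_{μ,λ}) ∈ 𝔅(μ,λ)`, and `ω(T(W_{μ,λ})) = 2μ + λ` for even `n`,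
while `ω(T(W_{μ,λ})) = 2μ + τ₁λ` for odd `n`. -/
theorem Wlow_mem_and_weight (n : ℕ) (hn : 2 ≤ n) (mu lam : Fin n → ℂ)
    (hlam : ∀ i, IsHalfInt (lam i)) (hdom : SODominant lam) :
    Wlow n mu lam ∈ TabB n mu lam ∧
      (n % 2 = 0 → ∀ k : Fin n, cwtv n (Wlow n mu lam) k = 2 * mu k + lam k) ∧
      (n % 2 = 1 → ∀ k : Fin n,
        cwtv n (Wlow n mu lam) k = 2 * mu k + (if (k : ℕ) = 0 then -lam k else lam k)) := by
  obtain ⟨a, ha⟩ := hdom.1 ⟨0, by omega⟩ ⟨1, by omega⟩ rfl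
  obtain ⟨b, hb⟩ := hdom.2 ⟨0, by omega⟩ ⟨1, by omega⟩ rfl rfl
  rw [zero_add] at hb
  have hell2 := ell_two n lam hn
  have hTp : ∀ {k i : ℕ}, 2 ≤ i → i ≤ k → k ≤ n →
      (CtoD (Wlow n mu lam)).p k i = ell n lam i := by
    intro k i h1 h2 h3
    show (if i = 1 then 0 else (Wlow n mu lam).p k i) = _
    rw [if_neg (by omega), Wlow_p2 n mu lam h1 h2 h3]
  -- chain condition `u_{K,1} > ℓ_2`
  have hchain1 : ∀ K, 1 ≤ K → K ≤ n → IntGT ((Wlow n mu lam).u K 1) (ell n lam 2) := by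
    intro K h1 h3
    rw [Wlow_u1 n mu lam h1 h3, hell2]
    by_cases hp : (n - K) % 2 = 0
    · rw [if_pos hp]
      exact ⟨a, by push_cast; linear_combination ha⟩
    · rw [if_neg hp]
      exact ⟨b, by push_cast; linear_combination hb⟩
  -- condition `-ℓ_2 ≥ u_{K,1}`
  have hcap : ∀ K, 1 ≤ K → K ≤ n → IntGE (-(ell n lam 2)) ((Wlow n mu lam).u K 1) := by
    intro K h1 h3
    rw [Wlow_u1 n mu lam h1 h3, hell2]
    by_cases hp : (n - K) % 2 = 0
    · rw [if_pos hp]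
      exact ⟨b, by push_cast; linear_combination hb⟩
    · rw [if_neg hp]
      exact ⟨a, by push_cast; linear_combination ha⟩
  -- general chain condition `u_{K,i} > ℓ_{i+1}`
  have hchain : ∀ K i, 1 ≤ i → i ≤ K → i + 1 ≤ n → K ≤ n →
      IntGT ((Wlow n mu lam).u K i) (ell n lam (i + 1)) := by
    intro K i h1 h2 h2' h3
    rcases eq_or_lt_of_le h1 with h | h
    · rw [← h]
      exact hchain1 K (by omega) h3
    · have h2' : 2 ≤ i := h
      rw [Wlow_u2 n mu lam h2' (by omega) h3]
      exact ell_step n lam hdom h2' (by omega)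
  -- the two weight computations
  have hwt : ∀ k : Fin n, 1 ≤ (k : ℕ) → cwtv n (Wlow n mu lam) k = 2 * mu k + lam k := by
    intro k hk
    have hkn : (k : ℕ) + 1 ≤ n := k.isLt
    have hfin : (⟨(k : ℕ) + 1 - 1, by omega⟩ : Fin n) = k := by ext; simp
    have h1 : ∑ i ∈ Finset.Icc 1 ((k : ℕ) + 1), (Wlow n mu lam).p ((k : ℕ) + 1) i
        = mu k + ∑ i ∈ Finset.Icc 2 ((k : ℕ) + 1), ell n lam i := by
      rw [sum_Icc_one (by omega), Wlow_p1 n mu lam (by omega) hkn, hfin]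
      congr 1
      exact Finset.sum_congr rfl fun i hi => by
        rw [Finset.mem_Icc] at hi; exact Wlow_p2 n mu lam hi.1 hi.2 hkn
    have h2 : ∑ i ∈ Finset.Icc 1 ((k : ℕ) + 1), (Wlow n mu lam).u ((k : ℕ) + 1) i
        = (Wlow n mu lam).u ((k : ℕ) + 1) 1 + ∑ i ∈ Finset.Icc 2 ((k : ℕ) + 1), ell n lam i := by
      rw [sum_Icc_one (by omega)]
      congr 1
      exact Finset.sum_congr rfl fun i hi => by
        rw [Finset.mem_Icc] at hi; exact Wlow_u2 n mu lam hi.1 hi.2 hkn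
    have h3 : ∑ i ∈ Finset.Icc 1 (k : ℕ), (Wlow n mu lam).u (k : ℕ) i
        = (Wlow n mu lam).u (k : ℕ) 1 + ∑ i ∈ Finset.Icc 2 (k : ℕ), ell n lam i := by
      rw [sum_Icc_one hk]
      congr 1
      exact Finset.sum_congr rfl fun i hi => by
        rw [Finset.mem_Icc] at hi; exact Wlow_u2 n mu lam hi.1 hi.2 (by omega)
    have h4 : ∑ i ∈ Finset.Icc 2 ((k : ℕ) + 1), ell n lam i
        = ∑ i ∈ Finset.Icc 2 (k : ℕ), ell n lam i + ell n lam ((k : ℕ) + 1) :=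
      Finset.sum_Icc_succ_top (by omega) _
    have h5 : (Wlow n mu lam).u ((k : ℕ) + 1) 1 + (Wlow n mu lam).u (k : ℕ) 1 = 1 := by
      rw [Wlow_u1 n mu lam (by omega) hkn, Wlow_u1 n mu lam (by omega) (by omega)]
      rcases Nat.mod_two_eq_zero_or_one (n - ((k : ℕ) + 1)) with h | h
      · rw [if_pos h, if_neg (show ¬(n - (k : ℕ)) % 2 = 0 by omega)]; ring
      · rw [if_neg (show ¬(n - ((k : ℕ) + 1)) % 2 = 0 by omega),
            if_pos (show (n - (k : ℕ)) % 2 = 0 by omega)]; ring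
    have h6 : ell n lam ((k : ℕ) + 1) = lam k - ((k : ℕ) : ℂ) - 1 + 3 / 2 := by
      simp only [ell]
      rw [dif_pos (by omega : (k : ℕ) + 1 - 1 < n), hfin]
      push_cast; ring
    simp only [cwtv, wt, Nat.add_sub_cancel]
    rw [h1, h2, h3, h4, h6]
    push_cast
    linear_combination -h5
  have hwt0 : ∀ k : Fin n, (k : ℕ) = 0 →
      cwtv n (Wlow n mu lam) k = 2 * mu k + 1 / 2 - (Wlow n mu lam).u 1 1 := by
    intro k hk0
    have e1 : Finset.Icc 1 1 = ({1} : Finset ℕ) := Finset.Icc_self 1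
    have e0 : (Finset.Icc 1 0 : Finset ℕ) = ∅ := by simp
    simp only [cwtv, wt, hk0, zero_add, show (1 : ℕ) - 1 = 0 from rfl, e1, e0,
      Finset.sum_singleton, Finset.sum_empty]
    rw [Wlow_p1 n mu lam le_rfl (by omega)]
    have hfin : (⟨1 - 1, by omega⟩ : Fin n) = k := by ext; simp [hk0]
    rw [hfin]
    push_cast; ring
  refine ⟨⟨⟨fun k i h => ?_, fun k i h => ?_⟩, fun k => ?_,
      ⟨fun k i h => ?_, fun k i h => ?_⟩, fun k hk2 hkn => ?_, fun i => ?_⟩, ?_, ?_⟩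
  · simp only [Wlow]; rw [dif_neg h]
  · simp only [Wlow]; rw [dif_neg h]
  · -- integrality of the first primed column
    have hfin : (⟨(k : ℕ) + 1 - 1, by omega⟩ : Fin n) = k := by ext; simp
    rw [Wlow_p1 n mu lam (by omega) k.isLt, hfin, sub_self]
    exact ⟨0, by simp⟩
  · show (Wlow n mu lam).u k i = 0
    simp only [Wlow]; rw [dif_neg h]
  · show (if i = 1 then 0 else (Wlow n mu lam).p k i) = 0
    by_cases h1 : i = 1
    · rw [if_pos h1]
    · rw [if_neg h1]
      simp only [Wlow]; rw [dif_neg (by omega)]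
  · -- D-standardness, row k with 2 ≤ k ≤ n
    refine ⟨?_, fun i hi1 hi2 => ?_, fun i hi1 hi2 => ?_, ?_, fun i hi1 hi2 => ?_,
        fun i hi1 hi2 => ?_⟩
    · rw [hTp le_rfl hk2 hkn]
      exact hcap k (by omega) hkn
    · rw [hTp hi1 hi2 hkn,
        show (CtoD (Wlow n mu lam)).u k i = ell n lam i from Wlow_u2 n mu lam hi1 hi2 hkn]
      exact ⟨0, by push_cast; ring⟩
    · rw [hTp (by omega) (by omega) hkn]
      exact hchain k i hi1 (by omega) (by omega) hkn
    · rw [hTp le_rfl hk2 hkn]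
      exact hcap (k - 1) (by omega) (by omega)
    · rw [hTp hi1 (by omega) hkn,
        show (CtoD (Wlow n mu lam)).u (k - 1) i = ell n lam i from
          Wlow_u2 n mu lam hi1 hi2 (by omega)]
      exact ⟨0, by push_cast; ring⟩
    · rw [hTp (by omega) (by omega) hkn]
      exact hchain (k - 1) i hi1 (by omega) (by omega) (by omega)
  · -- top row
    show (Wlow n mu lam).u n ((i : ℕ) + 1) = _
    by_cases h0 : (i : ℕ) = 0
    · rw [show (i : ℕ) + 1 = 1 by omega, Wlow_u1 n mu lam (by omega) le_rfl,
        if_pos (show (n - n) % 2 = 0 by omega)]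
      have hfin : (⟨0, by omega⟩ : Fin n) = i := by ext; simp [h0]
      rw [hfin, show ((i : ℕ) : ℂ) = 0 by rw [h0]; norm_num]
      ring
    · rw [Wlow_u2 n mu lam (by omega) (by omega : (i : ℕ) + 1 ≤ n) le_rfl]
      simp only [ell]
      rw [dif_pos (by omega : (i : ℕ) + 1 - 1 < n)]
      have hfin : (⟨(i : ℕ) + 1 - 1, by omega⟩ : Fin n) = i := by ext; simp
      rw [hfin]
      push_cast; ring
  · -- even n
    intro hpar k
    by_cases h0 : (k : ℕ) = 0
    · rw [hwt0 k h0, Wlow_u1 n mu lam le_rfl (by omega),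
        if_neg (show ¬(n - 1) % 2 = 0 by omega)]
      have hfin : (⟨0, by omega⟩ : Fin n) = k := by ext; simp [h0]
      rw [hfin]; ring
    · exact hwt k (by omega)
  · -- odd n
    intro hpar k
    by_cases h0 : (k : ℕ) = 0
    · rw [hwt0 k h0, Wlow_u1 n mu lam le_rfl (by omega),
        if_pos (show (n - 1) % 2 = 0 by omega), if_pos h0]
      have hfin : (⟨0, by omega⟩ : Fin n) = k := by ext; simp [h0]
      rw [hfin]; ring
    · rw [if_neg h0]
      exact hwt k (by omega)

end GTpaper
end
end

section
/- Let λ ∈ (1/2+ℤ)^n be a dominant so(2n)-weight, let k ∈ [n−1], and let T(R) ∈ D_st^λ. Define f_k(T(R)) = T(R+δ^{(k1)}) if r_{k1} ≠ −r'_{k2} and r_{k1} ≠ −r'_{k+1,2} (for k = 1 the first condition is vacuous since r'_{12} does not exist), and f_k(T(R)) = T(R−δ^{(k1)}) otherwise, where δ^{(k1)} is the type-D tableau with entry 1 at unprimed position (k,1) and 0 elsewhere. Then f_k(T(R)) ∈ D_st^λ. -/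
open scoped BigOperators Classical

noncomputable section

namespace GTpaper

attribute [local instance 100] LieRing.ofAssociativeRing

end GTpaper

namespace GTpaper

/-- The map `f_k` on type-`D` tableaux. -/
def fkD (k : ℕ) (R : Tab ℂ) : Tab ℂ :=
  if (k = 1 ∨ R.u k 1 ≠ -R.p k 2) ∧ R.u k 1 ≠ -R.p (k + 1) 2
  then R.addZ (deltaU k 1) else R.addZ (-deltaU k 1)

lemma addZ_deltaU_u (R : Tab ℂ) (k i a b : ℕ) :
    (R.addZ (deltaU k i)).u a b = R.u a b + (if a = k ∧ b = i then 1 else 0) := by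
  simp only [Tab.addZ, deltaU]
  split_ifs <;> simp

lemma addZ_deltaU_p (R : Tab ℂ) (k i a b : ℕ) :
    (R.addZ (deltaU k i)).p a b = R.p a b := by
  simp [Tab.addZ, deltaU]

lemma addZ_negDeltaU_u (R : Tab ℂ) (k i a b : ℕ) :
    (R.addZ (-deltaU k i)).u a b = R.u a b - (if a = k ∧ b = i then 1 else 0) := by
  show R.u a b + ((-(if a = k ∧ b = i then (1 : ℤ) else 0) : ℤ) : ℂ) = _
  split_ifs <;> push_cast <;> ring

lemma addZ_negDeltaU_p (R : Tab ℂ) (k i a b : ℕ) :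
    (R.addZ (-deltaU k i)).p a b = R.p a b := by
  show R.p a b + ((-(0 : ℤ) : ℤ) : ℂ) = _
  push_cast; ring

lemma IntGE.add_one_of_ne {a b : ℂ} (h : IntGE a b) (hne : a ≠ b) : IntGE a (b + 1) := by
  obtain ⟨m, hm⟩ := h
  cases m with
  | zero => exact absurd (by simpa using hm) hne
  | succ m' => exact ⟨m', by push_cast at hm ⊢; linear_combination hm⟩

lemma IntGE.sub_one {a b : ℂ} (h : IntGE a b) : IntGE a (b - 1) := by
  obtain ⟨m, hm⟩ := h
  exact ⟨m + 1, by push_cast; linear_combination hm⟩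

lemma IntGT.add_one {a b : ℂ} (h : IntGT a b) : IntGT (a + 1) b := by
  obtain ⟨m, hm⟩ := h
  exact ⟨m + 1, by push_cast; linear_combination hm⟩

/-- Key arithmetic lemma for the minus branch: if `u` is an integer, `-q ≥ u` and
`u > -u` (in the integer-shift order), then `u - 1 > q`. -/
lemma minus_gt {u q : ℂ} (K : ℤ) (hK : u = K) (hge : IntGE (-q) u) (hgt : IntGT u (-u)) :
    IntGT (u - 1) q := by
  obtain ⟨m1, h1⟩ := hge
  obtain ⟨m2, h2⟩ := hgt
  have h2' : ((2 * K : ℤ) : ℂ) = ((m2 : ℤ) : ℂ) + 1 := by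
    push_cast
    linear_combination h2 - 2 * hK
  have h2'' : (2 * K : ℤ) = (m2 : ℤ) + 1 := by exact_mod_cast h2'
  have hm2 : 1 ≤ m2 := by omega
  refine ⟨m1 + m2 - 1, ?_⟩
  have hq : q = -u - m1 := by linear_combination -h1
  have hcast : ((m1 + m2 - 1 : ℕ) : ℂ) = (m1 : ℂ) + m2 - 1 := by
    rw [Nat.cast_sub (by omega)]
    push_cast
    ring
  rw [hq, hcast]
  linear_combination h2

/-- Entries `u j 1` of a `D`-standard tableau with half-integer top row are integers. -/
lemma u1_int (n : ℕ) (lam : Fin n → ℂ) (hn : 2 ≤ n) (hlam : ∀ i, IsHalfInt (lam i))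
    (R : Tab ℂ) (hst : IsDStandard n R)
    (htop : ∀ i : Fin n, R.u n ((i : ℕ) + 1) = lam i - ((i : ℕ) + 1) + 3 / 2)
    (j : ℕ) (hj1 : 1 ≤ j) (hjn : j ≤ n) : ∃ K : ℤ, R.u j 1 = K := by
  have key : ∀ d : ℕ, ∀ j, 1 ≤ j → j + d = n → ∃ K : ℤ, R.u j 1 = K := by
    intro d
    induction d with
    | zero =>
      intro j hj1 hjn
      have hjn' : j = n := by omega
      subst hjn'
      obtain ⟨m, hm⟩ := hlam ⟨0, by omega⟩
      refine ⟨m + 1, ?_⟩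
      have := htop ⟨0, by omega⟩
      simp only [Fin.val_mk, Nat.cast_zero] at this
      rw [(by norm_num : (0 : ℂ) + 1 = 1)] at this
      rw [this, hm]
      push_cast
      ring
    | succ d ih =>
      intro j hj1 hjn
      obtain ⟨K, hK⟩ := ih (j + 1) (by omega) (by omega)
      obtain ⟨h1, _, _, h4, _, _⟩ := hst (j + 1) (by omega) (by omega)
      obtain ⟨m1, hm1⟩ := h1
      rw [(by omega : j + 1 - 1 = j)] at h4
      obtain ⟨m2, hm2⟩ := h4
      refine ⟨K + m1 - m2, ?_⟩
      have : R.u j 1 = R.u (j + 1) 1 + m1 - m2 := by linear_combination hm1 - hm2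
      rw [this, hK]
      push_cast
      ring
  exact key (n - j) j hj1 (by omega)

/-- `f_k` maps `D_st^λ` to itself, for `k ∈ [n-1]`. -/
theorem fk_maps_DSt_to_DSt (n : ℕ) (hn : 2 ≤ n) (lam : Fin n → ℂ)
    (hlam : ∀ i, IsHalfInt (lam i)) (hdom : SODominant lam)
    (k : ℕ) (hk1 : 1 ≤ k) (hk : k ≤ n - 1) (R : Tab ℂ) (hR : R ∈ DSt n lam) :
    fkD k R ∈ DSt n lam := by
  obtain ⟨hnorm, hst, htop⟩ := hR
  have hkn : k ≤ n := by omega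
  have hkn' : k < n := by omega
  obtain ⟨K, hK⟩ := u1_int n lam hn hlam R hst htop k hk1 hkn
  by_cases hcond : (k = 1 ∨ R.u k 1 ≠ -R.p k 2) ∧ R.u k 1 ≠ -R.p (k + 1) 2
  · -- plus branch
    rw [fkD, if_pos hcond]
    refine ⟨⟨?_, ?_⟩, ?_, ?_⟩
    · intro a b hab
      rw [addZ_deltaU_u, hnorm.1 a b hab]
      have hne : ¬(a = k ∧ b = 1) := by
        rintro ⟨rfl, rfl⟩; exact hab ⟨le_refl 1, hk1, hkn⟩
      rw [if_neg hne]; ring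
    · intro a b hab
      rw [addZ_deltaU_p]; exact hnorm.2 a b hab
    · intro m hm2 hmn
      obtain ⟨h1, h2, h3, h4, h5, h6⟩ := hst m hm2 hmn
      refine ⟨?_, ?_, ?_, ?_, ?_, ?_⟩
      · rw [addZ_deltaU_p, addZ_deltaU_u]
        by_cases hmk : m = k
        · subst hmk
          rw [if_pos ⟨rfl, rfl⟩]
          exact IntGE.add_one_of_ne h1
            (fun h => (hcond.1.resolve_left (by omega)) h.symm)
        · rw [if_neg (fun h => hmk h.1), add_zero]; exact h1
      · intro i hi2 him
        rw [addZ_deltaU_p, addZ_deltaU_u, if_neg (fun h => by omega), add_zero]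
        exact h2 i hi2 him
      · intro i hi1 him
        rw [addZ_deltaU_p, addZ_deltaU_u]
        by_cases h : m = k ∧ i = 1
        · obtain ⟨rfl, rfl⟩ := h
          rw [if_pos ⟨rfl, rfl⟩]
          exact (h3 1 le_rfl him).add_one
        · rw [if_neg h, add_zero]; exact h3 i hi1 him
      · rw [addZ_deltaU_p, addZ_deltaU_u]
        by_cases hmk : m - 1 = k
        · have hm : m = k + 1 := by omega
          subst hm
          rw [if_pos ⟨hmk, rfl⟩]
          simp only [Nat.add_sub_cancel] at h4 ⊢
          exact IntGE.add_one_of_ne h4 (fun h => hcond.2 h.symm)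
        · rw [if_neg (fun h => hmk h.1), add_zero]; exact h4
      · intro i hi2 him
        rw [addZ_deltaU_p, addZ_deltaU_u, if_neg (fun h => by omega), add_zero]
        exact h5 i hi2 him
      · intro i hi1 him
        rw [addZ_deltaU_p, addZ_deltaU_u]
        by_cases h : m - 1 = k ∧ i = 1
        · obtain ⟨hmk, rfl⟩ := h
          rw [if_pos ⟨hmk, rfl⟩]
          exact (h6 1 le_rfl him).add_one
        · rw [if_neg h, add_zero]; exact h6 i hi1 him
    · intro i
      rw [addZ_deltaU_u, if_neg (fun h => by omega), add_zero]
      exact htop i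
  · -- minus branch
    have hdisj : (2 ≤ k ∧ R.u k 1 = -R.p k 2) ∨ R.u k 1 = -R.p (k + 1) 2 := by
      by_cases hB : R.u k 1 = -R.p (k + 1) 2
      · exact Or.inr hB
      · left
        have hA : ¬(k = 1 ∨ R.u k 1 ≠ -R.p k 2) := fun h => hcond ⟨h, hB⟩
        push_neg at hA
        exact ⟨by omega, hA.2⟩
    have hgt : IntGT (R.u k 1) (-R.u k 1) := by
      rcases hdisj with ⟨hk2, hA⟩ | hB
      · have h3 := (hst k hk2 (by omega)).2.2.1 1 le_rfl (by omega)
        norm_num at h3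
        rwa [show R.p k 2 = -R.u k 1 by linear_combination hA] at h3
      · have h6 := (hst (k + 1) (by omega) (by omega)).2.2.2.2.2
        simp only [Nat.add_sub_cancel] at h6
        have h6' := h6 1 le_rfl (by omega)
        norm_num at h6'
        rwa [show R.p (k + 1) 2 = -R.u k 1 by linear_combination hB] at h6'
    rw [fkD, if_neg hcond]
    refine ⟨⟨?_, ?_⟩, ?_, ?_⟩
    · intro a b hab
      rw [addZ_negDeltaU_u, hnorm.1 a b hab]
      have hne : ¬(a = k ∧ b = 1) := by
        rintro ⟨rfl, rfl⟩; exact hab ⟨le_refl 1, hk1, hkn⟩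
      rw [if_neg hne]; ring
    · intro a b hab
      rw [addZ_negDeltaU_p]; exact hnorm.2 a b hab
    · intro m hm2 hmn
      obtain ⟨h1, h2, h3, h4, h5, h6⟩ := hst m hm2 hmn
      refine ⟨?_, ?_, ?_, ?_, ?_, ?_⟩
      · rw [addZ_negDeltaU_p, addZ_negDeltaU_u]
        by_cases hmk : m = k
        · subst hmk
          rw [if_pos ⟨rfl, rfl⟩]
          exact h1.sub_one
        · rw [if_neg (fun h => hmk h.1), sub_zero]; exact h1
      · intro i hi2 him
        rw [addZ_negDeltaU_p, addZ_negDeltaU_u, if_neg (fun h => by omega), sub_zero]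
        exact h2 i hi2 him
      · intro i hi1 him
        rw [addZ_negDeltaU_p, addZ_negDeltaU_u]
        by_cases h : m = k ∧ i = 1
        · obtain ⟨rfl, rfl⟩ := h
          rw [if_pos ⟨rfl, rfl⟩]
          exact minus_gt K hK h1 hgt
        · rw [if_neg h, sub_zero]; exact h3 i hi1 him
      · rw [addZ_negDeltaU_p, addZ_negDeltaU_u]
        by_cases hmk : m - 1 = k
        · rw [if_pos ⟨hmk, rfl⟩]
          exact h4.sub_one
        · rw [if_neg (fun h => hmk h.1), sub_zero]; exact h4
      · intro i hi2 him
        rw [addZ_negDeltaU_p, addZ_negDeltaU_u, if_neg (fun h => by omega), sub_zero]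
        exact h5 i hi2 him
      · intro i hi1 him
        rw [addZ_negDeltaU_p, addZ_negDeltaU_u]
        by_cases h : m - 1 = k ∧ i = 1
        · obtain ⟨hmk, rfl⟩ := h
          have hm : m = k + 1 := by omega
          subst hm
          rw [if_pos ⟨hmk, rfl⟩]
          simp only [Nat.add_sub_cancel] at h4 ⊢
          exact minus_gt K hK h4 hgt
        · rw [if_neg h, sub_zero]; exact h6 i hi1 him
    · intro i
      rw [addZ_negDeltaU_u, if_neg (fun h => by omega), sub_zero]
      exact htop i

end GTpaper
end
end

section
/- Let μ ∈ (ℂ∖ℤ)^n, let λ ∈ (1/2+ℤ)^n be a dominant so(2n)-weight, and let Z be a type-C tableau with integer entries and z_{n1} = ⋯ = z_{nn} = 0. If T(R) and T(R+Z) both belong to B(μ,λ) and ω(T(R)) = ω(T(R+Z)), then ∑_{i=1}^{k} z_{ki} ∈ 2ℤ for every k ∈ [n−1]. -/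
open scoped BigOperators Classical

noncomputable section

namespace GTpaper

attribute [local instance 100] LieRing.ofAssociativeRing

end GTpaper

namespace GTpaper

/-- if `T(R)` and `T(R+Z)` are both in `𝔅(μ,λ)` and have the same
`C`-weight, then the row sums of `Z` are even. -/
theorem same_weight_even_row_sums (n : ℕ) (hn : 2 ≤ n) (mu lam : Fin n → ℂ)
    (hmu : ∀ i, ¬IsInt (mu i)) (hlam : ∀ i, IsHalfInt (lam i)) (hdom : SODominant lam)
    (Z : Tab ℤ) (hZ : ∀ i, 1 ≤ i → i ≤ n → Z.u n i = 0)
    (R : Tab ℂ) (hR : R ∈ TabB n mu lam) (hRZ : R.addZ Z ∈ TabB n mu lam)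
    (hw : ∀ j : Fin n, wt ((j : ℕ) + 1) (R.addZ Z) = wt ((j : ℕ) + 1) R) :
    ∀ k, 1 ≤ k → k ≤ n - 1 → (2 : ℤ) ∣ ∑ i ∈ Finset.Icc 1 k, Z.u k i := by
  have key : ∀ k, 1 ≤ k → k ≤ n →
      (∑ i ∈ Finset.Icc 1 k, Z.u k i) + (∑ i ∈ Finset.Icc 1 (k - 1), Z.u (k - 1) i)
        = 2 * ∑ i ∈ Finset.Icc 1 k, Z.p k i := by
    intro k hk1 hkn
    have hj : wt k (R.addZ Z) = wt k R := by
      have := hw ⟨k - 1, by omega⟩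
      simp only [Fin.val_mk] at this
      rwa [show k - 1 + 1 = k from by omega] at this
    simp only [wt, Tab.addZ, Finset.sum_add_distrib] at hj
    have hC : ((∑ i ∈ Finset.Icc 1 k, Z.u k i : ℤ) : ℂ) +
        ((∑ i ∈ Finset.Icc 1 (k - 1), Z.u (k - 1) i : ℤ) : ℂ)
        = 2 * ((∑ i ∈ Finset.Icc 1 k, Z.p k i : ℤ) : ℂ) := by
      push_cast
      linear_combination -hj
    exact_mod_cast hC
  have hSn : ∑ i ∈ Finset.Icc 1 n, Z.u n i = 0 :=
    Finset.sum_eq_zero fun i hi =>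
      hZ i (Finset.mem_Icc.mp hi).1 (Finset.mem_Icc.mp hi).2
  have main : ∀ m k, 1 ≤ k → k + m = n → (2 : ℤ) ∣ ∑ i ∈ Finset.Icc 1 k, Z.u k i := by
    intro m
    induction m with
    | zero =>
      intro k hk1 hk
      have hkn : k = n := by omega
      subst hkn
      simp [hSn]
    | succ m ih =>
      intro k hk1 hk
      have h2 := key (k + 1) (by omega) (by omega)
      have hih := ih (k + 1) (by omega) (by omega)
      simp only [Nat.add_sub_cancel] at h2
      omega
  intro k hk1 hkn
  exact main (n - k) k hk1 (by omega)

end GTpaper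
end
end

section
/- Let μ ∈ (ℂ∖ℤ)^n and let λ ∈ (1/2+ℤ)^n be a dominant so(2n)-weight. Then {ω(T(W)) : T(W) ∈ B(μ,λ)} = {2μ + λ + (1,…,1) + q : q ∈ Q_C}. -/
open scoped BigOperators Classical

noncomputable section

namespace GTpaper

attribute [local instance 100] LieRing.ofAssociativeRing

end GTpaper

namespace GTpaper
/-! ### Auxiliary lemmas -/

lemma sum_Icc_one_fin {M : Type*} [AddCommMonoid M] (n : ℕ) (f : ℕ → M) :
    ∑ a ∈ Finset.Icc 1 n, f a = ∑ i : Fin n, f ((i : ℕ) + 1) := by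
  rw [Fin.sum_univ_eq_sum_range (fun j => f (j + 1)) n]
  induction n with
  | zero => simp
  | succ n ih => rw [Finset.sum_Icc_succ_top (by omega), ih, Finset.sum_range_succ]

lemma sum_Icc_one_split {M : Type*} [AddCommMonoid M] (f : ℕ → M) {k : ℕ} (hk : 1 ≤ k) :
    ∑ i ∈ Finset.Icc 1 k, f i = f 1 + ∑ i ∈ Finset.Icc 2 k, f i := by
  have h : Finset.Icc 1 k = insert 1 (Finset.Icc 2 k) := by
    ext x; simp only [Finset.mem_Icc, Finset.mem_insert]; omega
  rw [h, Finset.sum_insert (by simp)]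

lemma intGE_right_isInt {a b : ℂ} (h : IntGE a b) (ha : IsInt a) : IsInt b := by
  obtain ⟨m, hm⟩ := h; obtain ⟨p, hp⟩ := ha
  refine ⟨p - m, ?_⟩; push_cast; linear_combination hp - hm

lemma intGE_left_isInt {a b : ℂ} (h : IntGE a b) (hb : IsInt b) : IsInt a := by
  obtain ⟨m, hm⟩ := h; obtain ⟨p, hp⟩ := hb
  refine ⟨p + m, ?_⟩; push_cast; linear_combination hm + hp

lemma intGT_right_isInt {a b : ℂ} (h : IntGT a b) (ha : IsInt a) : IsInt b := by
  obtain ⟨m, hm⟩ := h; obtain ⟨p, hp⟩ := ha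
  refine ⟨p - m - 1, ?_⟩; push_cast; linear_combination hp - hm

lemma intGT_left_isInt {a b : ℂ} (h : IntGT a b) (hb : IsInt b) : IsInt a := by
  obtain ⟨m, hm⟩ := h; obtain ⟨p, hp⟩ := hb
  refine ⟨p + m + 1, ?_⟩; push_cast; linear_combination hm + hp

lemma intGE_of_le {a b : ℤ} (h : b ≤ a) : IntGE (a : ℂ) (b : ℂ) := by
  refine ⟨(a - b).toNat, ?_⟩
  have h2 : a = b + ((a - b).toNat : ℤ) := by omega
  exact_mod_cast congrArg (fun x : ℤ => (x : ℂ)) h2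

lemma intGT_of_lt {a b : ℤ} (h : b < a) : IntGT (a : ℂ) (b : ℂ) := by
  refine ⟨(a - b - 1).toNat, ?_⟩
  have h2 : a = b + ((a - b - 1).toNat : ℤ) + 1 := by omega
  exact_mod_cast congrArg (fun x : ℤ => (x : ℂ)) h2

/-! ### Auxiliary data for the construction of tableaux with prescribed weight -/

/-- `ℓ_i = λ_i - i + 3/2` as an integer, from `m : ℕ → ℤ` with `λ_{i+1} = m i + 1/2`. -/
def auxL (n : ℕ) (m : ℕ → ℤ) (i : ℕ) : ℤ :=
  if 1 ≤ i ∧ i ≤ n then m (i - 1) + 2 - i else 0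

/-- `q_k` (1-based) from `g : ℕ → ℤ` (0-based). -/
def auxQ (n : ℕ) (g : ℕ → ℤ) (k : ℕ) : ℤ :=
  if 1 ≤ k ∧ k ≤ n then g (k - 1) else 0

/-- Partial sums `q_1 + ⋯ + q_k`. -/
def auxS (n : ℕ) (g : ℕ → ℤ) (k : ℕ) : ℤ := ∑ j ∈ Finset.Icc 1 k, auxQ n g j

/-- First-column unprimed entries `t_k`, chosen in `{-ℓ_2, -ℓ_2 - 1}` with prescribed parity. -/
def auxT (n : ℕ) (m g : ℕ → ℤ) (k : ℕ) : ℤ :=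
  if 1 ≤ k ∧ k ≤ n - 1 then
    -auxL n m 2 - (auxL n m 1 + auxS n g k + auxL n m 2) % 2
  else auxL n m 1

/-- The integer shifts `z_k` of the first primed column. -/
def auxZ (n : ℕ) (m g : ℕ → ℤ) (k : ℕ) : ℤ :=
  (auxQ n g k + auxT n m g k + auxT n m g (k - 1)) / 2

/-- The tableau realizing the weight `2μ + λ + 1 + q`. -/
def auxW (n : ℕ) (muN : ℕ → ℂ) (m g : ℕ → ℤ) : Tab ℂ :=
  ⟨fun k i => if 1 ≤ i ∧ i ≤ k ∧ k ≤ n then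
      (if i = 1 then (auxT n m g k : ℂ) else (auxL n m i : ℂ)) else 0,
   fun k i => if 1 ≤ i ∧ i ≤ k ∧ k ≤ n then
      (if i = 1 then muN (k - 1) + (auxZ n m g k : ℂ) else (auxL n m i : ℂ)) else 0⟩

/-- the set of `C`-weights of tableaux in `𝔅(μ,λ)` is exactly
`2μ + λ + (1,…,1) + Q_C`. -/
theorem support_of_V (n : ℕ) (hn : 2 ≤ n) (mu lam : Fin n → ℂ)
    (hmu : ∀ i, ¬IsInt (mu i)) (hlam : ∀ i, IsHalfInt (lam i)) (hdom : SODominant lam) :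
    {γ : Fin n → ℂ | ∃ W ∈ TabB n mu lam, γ = cwtv n W} =
      {γ : Fin n → ℂ | QCvec (fun i => γ i - (2 * mu i + lam i + 1))} := by
  classical
  choose M hM using hlam
  ext γ
  simp only [Set.mem_setOf_eq]
  constructor
  · rintro ⟨W, ⟨hnorm, hmuint, hDnorm, hDstd, htop⟩, rfl⟩
    have hCD : ∀ k i, 2 ≤ i → (CtoD W).p k i = W.p k i := by
      intro k i hi; simp only [CtoD]; rw [if_neg (by omega)]
    -- integrality of the unprimed entries, top row first
    have hUtop : ∀ i, 1 ≤ i → i ≤ n → IsInt (W.u n i) := by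
      intro i h1 h2
      obtain ⟨j, rfl⟩ : ∃ j, i = j + 1 := ⟨i - 1, by omega⟩
      have h := htop ⟨j, by omega⟩
      refine ⟨M ⟨j, by omega⟩ + 1 - j, ?_⟩
      rw [show W.u n (j + 1) = (CtoD W).u n ((↑(⟨j, by omega⟩ : Fin n) : ℕ) + 1) from rfl, h,
        hM]
      push_cast
      ring
    have hUrow : ∀ d k, n = k + d → ∀ i, 1 ≤ i → i ≤ k → IsInt (W.u k i) := by
      intro d
      induction d with
      | zero =>
        intro k hk i h1 h2
        obtain rfl : k = n := by omega
        exact hUtop i h1 h2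
      | succ d ih =>
        intro k hk i h1 h2
        have hkn : k + 1 ≤ n := by omega
        obtain ⟨c1, c2, c3, c4, c5, c6⟩ := hDstd (k + 1) (by omega) hkn
        have hIH : ∀ j, 1 ≤ j → j ≤ k + 1 → IsInt (W.u (k + 1) j) := fun j a b =>
          ih (k + 1) (by omega) j a b
        have hp2 : IsInt ((CtoD W).p (k + 1) 2) := by
          have h3 := c3 1 le_rfl (by omega)
          exact intGT_right_isInt h3 (hIH 1 le_rfl (by omega))
        rcases eq_or_lt_of_le h1 with h | h
        · obtain rfl : i = 1 := h.symm
          have h6 := c6 1 le_rfl (by omega)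
          simp only [Nat.add_sub_cancel] at h6
          exact intGT_left_isInt h6 hp2
        · obtain ⟨j, rfl⟩ : ∃ j, i = j + 1 := ⟨i - 1, by omega⟩
          have hj1 : 1 ≤ j := by omega
          have hpint : IsInt ((CtoD W).p (k + 1) (j + 1)) := by
            have h3 := c3 j hj1 (by omega)
            exact intGT_right_isInt h3 (hIH j hj1 (by omega))
          have h5 := c5 (j + 1) (by omega) (by omega)
          simp only [Nat.add_sub_cancel] at h5
          exact intGE_right_isInt h5 hpint
    have hUint : ∀ k i, IsInt (W.u k i) := by
      intro k i
      by_cases hr : 1 ≤ i ∧ i ≤ k ∧ k ≤ n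
      · exact hUrow (n - k) k (by omega) i hr.1 hr.2.1
      · rw [hnorm.1 k i hr]; exact ⟨0, by simp⟩
    have hPif : ∀ k i, IsInt (if 2 ≤ i then W.p k i else 0) := by
      intro k i
      split_ifs with hi
      · by_cases hr : i ≤ k ∧ k ≤ n
        · obtain ⟨c1, c2, c3, c4, c5, c6⟩ := hDstd k (by omega) hr.2
          obtain ⟨j, rfl⟩ : ∃ j, i = j + 1 := ⟨i - 1, by omega⟩
          have h3 := c3 j (by omega) (by omega)
          have hint := intGT_right_isInt h3 (hUint k j)
          rwa [hCD k (j + 1) hi] at hint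
        · rw [hnorm.2 k i (by omega)]; exact ⟨0, by simp⟩
      · exact ⟨0, by simp⟩
    choose uZ huZ using hUint
    choose pZ hpZ using hPif
    choose zc hzc using hmuint
    have hPsum : ∀ r, ∑ a ∈ Finset.Icc 2 r, W.p r a
        = ((∑ a ∈ Finset.Icc 2 r, pZ r a : ℤ) : ℂ) := by
      intro r; push_cast
      refine Finset.sum_congr rfl fun a ha => ?_
      rw [Finset.mem_Icc] at ha
      have h := hpZ r a; rwa [if_pos ha.1] at h
    have hUsum : ∀ r, ∑ a ∈ Finset.Icc 1 r, W.u r a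
        = ((∑ a ∈ Finset.Icc 1 r, uZ r a : ℤ) : ℂ) := by
      intro r; push_cast; exact Finset.sum_congr rfl fun a _ => huZ r a
    refine ⟨fun k => 2 * zc k + 2 * (∑ a ∈ Finset.Icc 2 ((k : ℕ) + 1), pZ ((k : ℕ) + 1) a)
      - (∑ a ∈ Finset.Icc 1 ((k : ℕ) + 1), uZ ((k : ℕ) + 1) a)
      - (∑ a ∈ Finset.Icc 1 (k : ℕ), uZ (k : ℕ) a) + (k : ℕ) - 1 - M k, ?_, ?_⟩
    · -- parity of the sum
      have hkey : ∀ Uf Pf : ℕ → ℤ, Uf 0 = 0 →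
          Uf n = ∑ i : Fin n, (M i + 1 - (i : ℕ)) →
          2 ∣ ∑ i : Fin n, (2 * zc i + 2 * Pf ((i : ℕ) + 1) - Uf ((i : ℕ) + 1) - Uf (i : ℕ)
            + (i : ℕ) - 1 - M i) := by
        intro Uf Pf h0 hUn
        have htel : ∑ i : Fin n, (Uf ((i : ℕ) + 1) - Uf (i : ℕ)) = Uf n - Uf 0 := by
          rw [Fin.sum_univ_eq_sum_range (fun j => Uf (j + 1) - Uf j) n]
          exact Finset.sum_range_sub Uf n
        have hsplit : ∑ i : Fin n, (2 * zc i + 2 * Pf ((i : ℕ) + 1) - Uf ((i : ℕ) + 1)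
              - Uf (i : ℕ) + (i : ℕ) - 1 - M i)
            = (∑ i : Fin n, (2 * (zc i + Pf ((i : ℕ) + 1) - Uf (i : ℕ)) + ((i : ℕ) - 1 - M i)))
              - ∑ i : Fin n, (Uf ((i : ℕ) + 1) - Uf (i : ℕ)) := by
          rw [← Finset.sum_sub_distrib]
          exact Finset.sum_congr rfl fun i _ => by ring
        rw [hsplit, htel, h0, hUn, Finset.sum_add_distrib, ← Finset.mul_sum]
        have hneg : ∑ i : Fin n, (M i + 1 - ((i : ℕ) : ℤ))
            = - ∑ i : Fin n, (((i : ℕ) : ℤ) - 1 - M i) := by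
          rw [← Finset.sum_neg_distrib]
          exact Finset.sum_congr rfl fun i _ => by ring
        rw [hneg]
        exact ⟨(∑ i : Fin n, (zc i + Pf ((i : ℕ) + 1) - Uf (i : ℕ)))
          + ∑ i : Fin n, (((i : ℕ) : ℤ) - 1 - M i), by ring⟩
      have hUn : (∑ a ∈ Finset.Icc 1 n, uZ n a) = ∑ i : Fin n, (M i + 1 - (i : ℕ)) := by
        rw [sum_Icc_one_fin]
        refine Finset.sum_congr rfl fun i _ => ?_
        have h := htop i
        have hc : ((uZ n ((i : ℕ) + 1) : ℤ) : ℂ) = ((M i + 1 - (i : ℕ) : ℤ) : ℂ) := by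
          rw [← huZ, show W.u n ((i : ℕ) + 1) = (CtoD W).u n ((i : ℕ) + 1) from rfl, h, hM]
          push_cast
          ring
        exact Int.cast_injective hc
      exact hkey (fun r => ∑ a ∈ Finset.Icc 1 r, uZ r a)
        (fun r => ∑ a ∈ Finset.Icc 2 r, pZ r a) (by simp) hUn
    · -- pointwise value
      intro i
      have hsplit := sum_Icc_one_split (fun a => W.p ((i : ℕ) + 1) a)
        (show 1 ≤ (i : ℕ) + 1 by omega)
      simp only [cwtv, wt, Nat.add_sub_cancel]
      rw [hsplit, hPsum, hUsum, hUsum, hM i]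
      have hz := hzc i
      push_cast
      push_cast at hz
      linear_combination 2 * hz
  · rintro ⟨q, hqsum, hq⟩
    -- ℕ-indexed versions of `M`, `q`, `mu`
    set Mn : ℕ → ℤ := fun i => if h : i < n then M ⟨i, h⟩ else 0 with hMn_def
    set qn : ℕ → ℤ := fun i => if h : i < n then q ⟨i, h⟩ else 0 with hqn_def
    set muN : ℕ → ℂ := fun i => if h : i < n then mu ⟨i, h⟩ else 0 with hmuN_def
    have hMn : ∀ (i : ℕ) (h : i < n), Mn i = M ⟨i, h⟩ := fun i h => by
      rw [hMn_def]; exact dif_pos h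
    have hqnv : ∀ (i : ℕ) (h : i < n), qn i = q ⟨i, h⟩ := fun i h => by
      rw [hqn_def]; exact dif_pos h
    have hmuNv : ∀ (i : ℕ) (h : i < n), muN i = mu ⟨i, h⟩ := fun i h => by
      rw [hmuN_def]; exact dif_pos h
    -- dominance facts
    have hdec : ∀ i : ℕ, i + 1 < n → Mn (i + 1) ≤ Mn i := by
      intro i h
      obtain ⟨m, hm⟩ := hdom.1 ⟨i, by omega⟩ ⟨i + 1, h⟩ rfl
      rw [hM, hM] at hm
      have hc : ((Mn i : ℤ) : ℂ) = ((Mn (i + 1) + (m : ℤ) : ℤ) : ℂ) := by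
        rw [hMn i (by omega), hMn (i + 1) h]
        push_cast
        linear_combination hm
      have := Int.cast_injective (α := ℂ) hc
      omega
    have h01 : Mn 0 + Mn 1 + 1 ≤ 0 := by
      obtain ⟨m, hm⟩ := hdom.2 ⟨0, by omega⟩ ⟨1, by omega⟩ rfl rfl
      rw [hM, hM] at hm
      have hc : ((-(Mn 0 + Mn 1 + 1) : ℤ) : ℂ) = ((m : ℤ) : ℂ) := by
        rw [hMn 0 (by omega), hMn 1 (by omega)]
        push_cast
        linear_combination hm
      have := Int.cast_injective (α := ℂ) hc
      omega
    -- values of auxL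
    have e1 : auxL n Mn 1 = Mn 0 + 1 := by
      rw [auxL, if_pos ⟨le_rfl, by omega⟩]; norm_num; omega
    have e2 : auxL n Mn 2 = Mn 1 := by
      rw [auxL, if_pos ⟨by omega, hn⟩]; norm_num
    have hdec01 : Mn 1 ≤ Mn 0 := hdec 0 (by omega)
    have hL2neg : auxL n Mn 2 ≤ -1 := by omega
    have hL12 : auxL n Mn 1 + auxL n Mn 2 ≤ 0 := by omega
    have hLdec : ∀ i : ℕ, 1 ≤ i → i + 1 ≤ n → auxL n Mn (i + 1) < auxL n Mn i := by
      intro i h1 h2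
      obtain ⟨j, rfl⟩ : ∃ j, i = j + 1 := ⟨i - 1, by omega⟩
      have hd := hdec j (by omega)
      rw [auxL, auxL, if_pos ⟨by omega, h2⟩, if_pos ⟨by omega, by omega⟩]
      simp only [Nat.add_sub_cancel]
      push_cast
      omega
    -- bounds for t
    have htb : ∀ k : ℕ, auxL n Mn 2 < auxT n Mn qn k ∧ auxT n Mn qn k ≤ -auxL n Mn 2 := by
      intro k
      rw [auxT]
      split_ifs with hk
      · have h1 : 0 ≤ (auxL n Mn 1 + auxS n qn k + auxL n Mn 2) % 2 :=
          Int.emod_nonneg _ (by norm_num)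
        have h2 : (auxL n Mn 1 + auxS n qn k + auxL n Mn 2) % 2 < 2 :=
          Int.emod_lt_of_pos _ (by norm_num)
        omega
      · omega
    -- parity facts
    have hS0 : auxS n qn 0 = 0 := by
      rw [auxS, show Finset.Icc 1 0 = (∅ : Finset ℕ) from by simp, Finset.sum_empty]
    have hSrec : ∀ k : ℕ, 1 ≤ k → auxS n qn k = auxS n qn (k - 1) + auxQ n qn k := by
      intro k hk
      obtain ⟨j, rfl⟩ : ∃ j, k = j + 1 := ⟨k - 1, by omega⟩
      rw [auxS, auxS, Finset.sum_Icc_succ_top (by omega)]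
      simp only [Nat.add_sub_cancel]
    have hSn : auxS n qn n = ∑ i : Fin n, q i := by
      rw [auxS, sum_Icc_one_fin]
      refine Finset.sum_congr rfl fun i _ => ?_
      rw [auxQ, if_pos ⟨by omega, by omega⟩]
      simp only [Nat.add_sub_cancel]
      rw [hqnv (i : ℕ) i.isLt]
    have hpar : ∀ k : ℕ, k ≤ n → 2 ∣ (auxT n Mn qn k + auxL n Mn 1 + auxS n qn k) := by
      intro k hk
      rw [auxT]
      split_ifs with hcond
      · omega
      · rcases (show k = 0 ∨ k = n by omega) with rfl | rfl
        · rw [hS0]; omega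
        · rw [hSn]; omega
    have hzv : ∀ k : ℕ, 1 ≤ k → k ≤ n →
        2 * auxZ n Mn qn k = auxQ n qn k + auxT n Mn qn k + auxT n Mn qn (k - 1) := by
      intro k h1 h2
      have p1 := hpar k h2
      have p2 := hpar (k - 1) (by omega)
      have hr := hSrec k h1
      rw [auxZ]
      omega
    -- the tableau
    refine ⟨auxW n muN Mn qn, ⟨⟨fun k i h => if_neg h, fun k i h => if_neg h⟩, ?_, ?_, ?_, ?_⟩, ?_⟩
    · -- first primed column in μ + ℤ
      intro k
      show IsInt ((if 1 ≤ 1 ∧ 1 ≤ (k : ℕ) + 1 ∧ (k : ℕ) + 1 ≤ n then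
        (if (1 : ℕ) = 1 then muN ((k : ℕ) + 1 - 1) + (auxZ n Mn qn ((k : ℕ) + 1) : ℂ)
          else (auxL n Mn 1 : ℂ)) else 0) - mu k)
      rw [if_pos ⟨le_rfl, by omega, by omega⟩, if_pos rfl]
      simp only [Nat.add_sub_cancel]
      rw [hmuNv (k : ℕ) k.isLt, Fin.eta]
      exact ⟨auxZ n Mn qn ((k : ℕ) + 1), by ring⟩
    · -- DNorm
      constructor
      · intro k i h
        show (if 1 ≤ i ∧ i ≤ k ∧ k ≤ n then _ else 0) = 0
        rw [if_neg h]
      · intro k i h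
        show (if i = 1 then 0 else (auxW n muN Mn qn).p k i) = 0
        by_cases hi : i = 1
        · rw [if_pos hi]
        · rw [if_neg hi]
          show (if 1 ≤ i ∧ i ≤ k ∧ k ≤ n then _ else 0) = 0
          rw [if_neg (by omega)]
    · -- IsDStandard
      have hu1 : ∀ r, 1 ≤ r → r ≤ n → (CtoD (auxW n muN Mn qn)).u r 1
          = (auxT n Mn qn r : ℂ) := by
        intro r a b
        show (if 1 ≤ 1 ∧ 1 ≤ r ∧ r ≤ n then
          (if (1 : ℕ) = 1 then (auxT n Mn qn r : ℂ) else _) else 0) = _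
        rw [if_pos ⟨le_rfl, a, b⟩, if_pos rfl]
      have hui : ∀ r i, 2 ≤ i → i ≤ r → r ≤ n → (CtoD (auxW n muN Mn qn)).u r i
          = (auxL n Mn i : ℂ) := by
        intro r i a b c
        show (if 1 ≤ i ∧ i ≤ r ∧ r ≤ n then
          (if i = 1 then (auxT n Mn qn r : ℂ) else (auxL n Mn i : ℂ)) else 0) = _
        rw [if_pos ⟨by omega, b, c⟩, if_neg (by omega)]
      have hpi : ∀ r i, 2 ≤ i → i ≤ r → r ≤ n → (CtoD (auxW n muN Mn qn)).p r i
          = (auxL n Mn i : ℂ) := by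
        intro r i a b c
        show (if i = 1 then 0 else (auxW n muN Mn qn).p r i) = _
        rw [if_neg (by omega)]
        show (if 1 ≤ i ∧ i ≤ r ∧ r ≤ n then
          (if i = 1 then _ else (auxL n Mn i : ℂ)) else 0) = _
        rw [if_pos ⟨by omega, b, c⟩, if_neg (by omega)]
      have hnegL : -((auxL n Mn 2 : ℤ) : ℂ) = ((-auxL n Mn 2 : ℤ) : ℂ) := by push_cast; ring
      intro k hk2 hkn
      refine ⟨?_, ?_, ?_, ?_, ?_, ?_⟩
      · rw [hpi k 2 le_rfl hk2 hkn, hu1 k (by omega) hkn, hnegL]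
        exact intGE_of_le (htb k).2
      · intro i h2 hik
        rw [hpi k i h2 hik hkn, hui k i h2 hik hkn]
        exact intGE_of_le le_rfl
      · intro i h1 hik
        by_cases hi : i = 1
        · subst hi
          rw [hu1 k (by omega) hkn, hpi k 2 le_rfl hik hkn]
          exact intGT_of_lt (htb k).1
        · rw [hui k i (by omega) (by omega) hkn, hpi k (i + 1) (by omega) hik hkn]
          exact intGT_of_lt (hLdec i (by omega) (by omega))
      · rw [hpi k 2 le_rfl hk2 hkn, hu1 (k - 1) (by omega) (by omega), hnegL]
        exact intGE_of_le (htb (k - 1)).2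
      · intro i h2 hik1
        rw [hpi k i h2 (by omega) hkn, hui (k - 1) i h2 hik1 (by omega)]
        exact intGE_of_le le_rfl
      · intro i h1 hik1
        by_cases hi : i = 1
        · subst hi
          rw [hu1 (k - 1) (by omega) (by omega), hpi k 2 le_rfl (by omega) hkn]
          exact intGT_of_lt (htb (k - 1)).1
        · rw [hui (k - 1) i (by omega) hik1 (by omega),
            hpi k (i + 1) (by omega) (by omega) hkn]
          exact intGT_of_lt (hLdec i (by omega) (by omega))
    · -- top row
      intro i
      have hMni : Mn (i : ℕ) = M i := by
        rw [hMn (i : ℕ) i.isLt]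
      show (if 1 ≤ (i : ℕ) + 1 ∧ (i : ℕ) + 1 ≤ n ∧ n ≤ n then
        (if (i : ℕ) + 1 = 1 then (auxT n Mn qn n : ℂ) else (auxL n Mn ((i : ℕ) + 1) : ℂ))
        else 0) = lam i - ((i : ℕ) + 1) + 3 / 2
      rw [if_pos ⟨by omega, by omega, le_rfl⟩]
      by_cases h0 : (i : ℕ) = 0
      · rw [if_pos (by omega), auxT, if_neg (by omega), e1, hM i]
        have hM0 : Mn 0 = M i := by rw [← h0]; exact hMni
        rw [hM0, h0]
        push_cast
        ring
      · rw [if_neg (by omega), auxL, if_pos ⟨by omega, by omega⟩]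
        simp only [Nat.add_sub_cancel]
        rw [hMni, hM i]
        push_cast
        ring
    · -- the weight
      funext k
      have hval : cwtv n (auxW n muN Mn qn) k = 2 * mu k + lam k + 1 + (q k : ℂ) := by
        have hp1v : (auxW n muN Mn qn).p ((k : ℕ) + 1) 1
            = mu k + (auxZ n Mn qn ((k : ℕ) + 1) : ℂ) := by
          show (if 1 ≤ 1 ∧ 1 ≤ (k : ℕ) + 1 ∧ (k : ℕ) + 1 ≤ n then
            (if (1 : ℕ) = 1 then muN ((k : ℕ) + 1 - 1) + _ else _) else 0) = _
          rw [if_pos ⟨le_rfl, by omega, by omega⟩, if_pos rfl]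
          simp only [Nat.add_sub_cancel]
          rw [hmuNv (k : ℕ) k.isLt, Fin.eta]
        have hpv : ∀ a, 2 ≤ a → a ≤ (k : ℕ) + 1 →
            (auxW n muN Mn qn).p ((k : ℕ) + 1) a = (auxL n Mn a : ℂ) := by
          intro a ha hak
          show (if 1 ≤ a ∧ a ≤ (k : ℕ) + 1 ∧ (k : ℕ) + 1 ≤ n then
            (if a = 1 then _ else (auxL n Mn a : ℂ)) else 0) = _
          rw [if_pos ⟨by omega, hak, by omega⟩, if_neg (by omega)]
        have huv : ∀ r a, 1 ≤ a → a ≤ r → r ≤ n → (auxW n muN Mn qn).u r a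
            = (if a = 1 then (auxT n Mn qn r : ℂ) else (auxL n Mn a : ℂ)) := by
          intro r a h1 h2 h3
          show (if 1 ≤ a ∧ a ≤ r ∧ r ≤ n then _ else 0) = _
          rw [if_pos ⟨h1, h2, h3⟩]
        have hQv : auxQ n qn ((k : ℕ) + 1) = q k := by
          rw [auxQ, if_pos ⟨by omega, by omega⟩]
          simp only [Nat.add_sub_cancel]
          rw [hqnv (k : ℕ) k.isLt]
        have hs2 : ∀ r, 1 ≤ r → r ≤ n → ∑ a ∈ Finset.Icc 1 r, (auxW n muN Mn qn).u r a
            = (auxT n Mn qn r : ℂ) + ((∑ a ∈ Finset.Icc 2 r, auxL n Mn a : ℤ) : ℂ) := by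
          intro r h1 h3
          rw [sum_Icc_one_split _ h1, huv r 1 le_rfl h1 h3, if_pos rfl]
          congr 1
          push_cast
          refine Finset.sum_congr rfl fun a ha => ?_
          rw [Finset.mem_Icc] at ha
          rw [huv r a (by omega) ha.2 h3, if_neg (by omega)]
        have hs1 : ∑ a ∈ Finset.Icc 1 ((k : ℕ) + 1), (auxW n muN Mn qn).p ((k : ℕ) + 1) a
            = mu k + (auxZ n Mn qn ((k : ℕ) + 1) : ℂ)
              + ((∑ a ∈ Finset.Icc 2 ((k : ℕ) + 1), auxL n Mn a : ℤ) : ℂ) := by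
          rw [sum_Icc_one_split _ (by omega), hp1v]
          congr 1
          push_cast
          refine Finset.sum_congr rfl fun a ha => ?_
          rw [Finset.mem_Icc] at ha
          exact hpv a ha.1 ha.2
        simp only [cwtv, wt, Nat.add_sub_cancel]
        rw [hs1, hs2 ((k : ℕ) + 1) (by omega) (by omega), hM k]
        have c1 := congrArg (fun x : ℤ => (x : ℂ)) (hzv ((k : ℕ) + 1) (by omega) (by omega))
        simp only [Nat.add_sub_cancel] at c1
        have c4 := congrArg (fun x : ℤ => (x : ℂ)) hQv
        rcases Nat.eq_zero_or_pos (k : ℕ) with h0 | h0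
        · -- first row
          rw [h0]
          rw [show Finset.Icc 1 0 = (∅ : Finset ℕ) from by simp, Finset.sum_empty]
          have ct0 : auxT n Mn qn 0 = Mn 0 + 1 := by
            rw [auxT, if_neg (by omega)]; exact e1
          have hM0 : Mn 0 = M k := by rw [← h0]; rw [hMn (k : ℕ) k.isLt]
          have c2 := congrArg (fun x : ℤ => (x : ℂ)) ct0
          have c3 := congrArg (fun x : ℤ => (x : ℂ)) hM0
          rw [h0] at c1 c4
          have hS20 : Finset.Icc 2 (0 + 1) = (∅ : Finset ℕ) := by simp
          rw [hS20, Finset.sum_empty]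
          push_cast at c1 c2 c3 c4 ⊢
          linear_combination c1 + c2 + c3 + c4
        · -- higher rows
          have hS2d : (∑ a ∈ Finset.Icc 2 ((k : ℕ) + 1), auxL n Mn a)
              = (∑ a ∈ Finset.Icc 2 (k : ℕ), auxL n Mn a) + auxL n Mn ((k : ℕ) + 1) := by
            exact Finset.sum_Icc_succ_top (by omega) _
          have hLv : auxL n Mn ((k : ℕ) + 1) = M k + 1 - (k : ℕ) := by
            rw [auxL, if_pos ⟨by omega, by omega⟩]
            simp only [Nat.add_sub_cancel]
            rw [hMn (k : ℕ) k.isLt]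
            have := congrArg M (Fin.eta k k.isLt)
            omega
          rw [hs2 (k : ℕ) h0 (by omega)]
          have c2 := congrArg (fun x : ℤ => (x : ℂ)) hS2d
          have c3 := congrArg (fun x : ℤ => (x : ℂ)) hLv
          push_cast at c1 c2 c3 c4 ⊢
          linear_combination c1 + c2 + c3 + c4
      rw [hval]
      linear_combination hq k

end GTpaper
end
end
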